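/- arXiv:1405.2581 — 4 statements merged into one kernel-verified Lean document; each statement's English description precedes it below -/
import Mathlib

section
/- Let n ≥ 1, R > 0, let μ be a probability measure on ℝⁿ supported in the closed ball B_R of radius R centered at 0, and let δ > 0. Let p_δ be the density of μ * γ_δ and set V_δ(x) = −log p_δ(x). Then Hess(V_δ)(x) ≥ (1/δ − 2R²/δ²) · I for every x ∈ ℝⁿ; that is, for every x ∈ ℝⁿ and every unit vector X ∈ ℝⁿ, the second directional derivative of V_δ at x in direction X is at least 1/δ − 2R²/δ². -/
open MeasureTheory Real

/-- Density of the convolution μ * γ_δ on ℝⁿ: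
p_δ(x) = ∫ (2πδ)^{-n/2} exp(−|x−y|²/(2δ)) dμ(y). -/
noncomputable def pdeltan (n : ℕ) (δ : ℝ) (μ : Measure (EuclideanSpace ℝ (Fin n)))
    (x : EuclideanSpace ℝ (Fin n)) : ℝ :=
  ∫ y, (2 * π * δ) ^ (-(n : ℝ) / 2) * Real.exp (-‖x - y‖ ^ 2 / (2 * δ)) ∂μ


noncomputable def gs (n : ℕ) (δ : ℝ) (x X : EuclideanSpace ℝ (Fin n)) (t : ℝ)
    (y : EuclideanSpace ℝ (Fin n)) : ℝ :=
  (2 * π * δ) ^ (-(n : ℝ) / 2) * Real.exp (-‖x + t • X - y‖ ^ 2 / (2 * δ))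

noncomputable def gs1 (n : ℕ) (δ : ℝ) (x X : EuclideanSpace ℝ (Fin n)) (t : ℝ)
    (y : EuclideanSpace ℝ (Fin n)) : ℝ :=
  gs n δ x X t y * (-(inner ℝ X (x + t • X - y) : ℝ) / δ)

noncomputable def gs2 (n : ℕ) (δ : ℝ) (x X : EuclideanSpace ℝ (Fin n)) (t : ℝ)
    (y : EuclideanSpace ℝ (Fin n)) : ℝ :=
  gs n δ x X t y * ((inner ℝ X (x + t • X - y) : ℝ) ^ 2 / δ ^ 2 - 1 / δ)

lemma gs_pos (n : ℕ) {δ : ℝ} (hδ : 0 < δ) (x X : EuclideanSpace ℝ (Fin n)) (t : ℝ)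
    (y : EuclideanSpace ℝ (Fin n)) : 0 < gs n δ x X t y := by
  have h2 : (0:ℝ) < 2 * π * δ := by positivity
  exact mul_pos (Real.rpow_pos_of_pos h2 _) (Real.exp_pos _)

lemma gs_le (n : ℕ) {δ : ℝ} (hδ : 0 < δ) (x X : EuclideanSpace ℝ (Fin n)) (t : ℝ)
    (y : EuclideanSpace ℝ (Fin n)) : gs n δ x X t y ≤ (2 * π * δ) ^ (-(n : ℝ) / 2) := by
  have h2 : (0:ℝ) < 2 * π * δ := by positivity
  have : Real.exp (-‖x + t • X - y‖ ^ 2 / (2 * δ)) ≤ 1 := by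
    rw [Real.exp_le_one_iff]
    apply div_nonpos_of_nonpos_of_nonneg
    · simpa using sq_nonneg ‖x + t • X - y‖
    · positivity
  calc gs n δ x X t y ≤ (2 * π * δ) ^ (-(n : ℝ) / 2) * 1 := by
        exact mul_le_mul_of_nonneg_left this (Real.rpow_pos_of_pos h2 _).le
    _ = _ := mul_one _

lemma cont_gs (n : ℕ) (δ : ℝ) (x X : EuclideanSpace ℝ (Fin n)) (t : ℝ) :
    Continuous (fun y => gs n δ x X t y) := by
  unfold gs
  exact continuous_const.mul
    (Real.continuous_exp.comp
      ((((continuous_const.sub continuous_id).norm.pow 2).neg).div_const (2 * δ)))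

lemma cont_inner_line (n : ℕ) (x X : EuclideanSpace ℝ (Fin n)) (t : ℝ) :
    Continuous (fun y : EuclideanSpace ℝ (Fin n) => (inner ℝ X (x + t • X - y) : ℝ)) :=
  continuous_const.inner (continuous_const.sub continuous_id)

lemma cont_gs1 (n : ℕ) (δ : ℝ) (x X : EuclideanSpace ℝ (Fin n)) (t : ℝ) :
    Continuous (fun y => gs1 n δ x X t y) := by
  unfold gs1
  exact (cont_gs n δ x X t).mul (((cont_inner_line n x X t).neg).div_const δ)

lemma cont_gs2 (n : ℕ) (δ : ℝ) (x X : EuclideanSpace ℝ (Fin n)) (t : ℝ) :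
    Continuous (fun y => gs2 n δ x X t y) := by
  unfold gs2
  exact (cont_gs n δ x X t).mul
    ((((cont_inner_line n x X t).pow 2).div_const (δ ^ 2)).sub continuous_const)

lemma norm_line_le (n : ℕ) {R : ℝ} (x X y : EuclideanSpace ℝ (Fin n)) (s : ℝ)
    (hX : ‖X‖ = 1) (hy : ‖y‖ ≤ R) : ‖x + s • X - y‖ ≤ ‖x‖ + |s| + R := by
  calc ‖x + s • X - y‖ ≤ ‖x + s • X‖ + ‖y‖ := norm_sub_le _ _
    _ ≤ ‖x‖ + ‖s • X‖ + ‖y‖ := by gcongr; exact norm_add_le _ _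
    _ ≤ ‖x‖ + |s| + R := by rw [norm_smul, hX]; simp [Real.norm_eq_abs]; gcongr

lemma abs_inner_line (n : ℕ) (x X y : EuclideanSpace ℝ (Fin n)) (s : ℝ) (hX : ‖X‖ = 1) :
    |(inner ℝ X (x + s • X - y) : ℝ)| ≤ ‖x + s • X - y‖ := by
  calc |(inner ℝ X (x + s • X - y) : ℝ)| ≤ ‖X‖ * ‖x + s • X - y‖ := abs_real_inner_le_norm _ _
    _ = ‖x + s • X - y‖ := by rw [hX, one_mul]

lemma hasDerivAt_line (n : ℕ) (x X y : EuclideanSpace ℝ (Fin n)) (t : ℝ) :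
    HasDerivAt (fun s : ℝ => x + s • X - y) X t := by
  simpa using (((hasDerivAt_id t).smul_const X).const_add x).sub_const y

lemma hasDerivAt_gs (n : ℕ) (δ : ℝ) (hδ : 0 < δ) (x X y : EuclideanSpace ℝ (Fin n)) (t : ℝ) :
    HasDerivAt (fun s : ℝ => gs n δ x X s y) (gs1 n δ x X t y) t := by
  have hu := hasDerivAt_line n x X y t
  have hin : HasDerivAt (fun s : ℝ => (inner ℝ (x + s • X - y) (x + s • X - y) : ℝ))
      ((inner ℝ (x + t • X - y) X : ℝ) + (inner ℝ X (x + t • X - y) : ℝ)) t := hu.inner ℝ hu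
  have hg : HasDerivAt (fun s : ℝ => -‖x + s • X - y‖ ^ 2 / (2 * δ))
      (-(inner ℝ X (x + t • X - y) : ℝ) / δ) t := by
    have heq : (fun s : ℝ => -‖x + s • X - y‖ ^ 2 / (2 * δ))
        = fun s : ℝ => -(inner ℝ (x + s • X - y) (x + s • X - y) : ℝ) / (2 * δ) := by
      funext s; rw [real_inner_self_eq_norm_sq]
    rw [heq]
    refine ((hin.neg).div_const (2 * δ)).congr_deriv ?_
    rw [real_inner_comm]
    field_simp
    ring
  have := (hg.exp).const_mul ((2 * π * δ) ^ (-(n : ℝ) / 2))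
  refine this.congr_deriv ?_
  simp only [gs1, gs]
  ring

lemma hasDerivAt_gs1 (n : ℕ) (δ : ℝ) (hδ : 0 < δ) (x X y : EuclideanSpace ℝ (Fin n))
    (hX : ‖X‖ = 1) (t : ℝ) :
    HasDerivAt (fun s : ℝ => gs1 n δ x X s y) (gs2 n δ x X t y) t := by
  have hu := hasDerivAt_line n x X y t
  have ha : HasDerivAt (fun s : ℝ => (inner ℝ X (x + s • X - y) : ℝ)) 1 t := by
    have h0 := (hasDerivAt_const t X).inner ℝ hu
    have h1 : (inner ℝ X X : ℝ) + (inner ℝ (0 : EuclideanSpace ℝ (Fin n)) (x + t • X - y) : ℝ)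
        = 1 := by rw [inner_zero_left, real_inner_self_eq_norm_sq, hX]; norm_num
    exact h1 ▸ h0
  have ha' : HasDerivAt (fun s : ℝ => -(inner ℝ X (x + s • X - y) : ℝ) / δ) (-(1:ℝ)/δ) t :=
    (ha.neg).div_const δ
  have := (hasDerivAt_gs n δ hδ x X y t).mul ha'
  refine this.congr_deriv ?_
  simp only [gs2, gs1, gs]
  field_simp
  ring

lemma var_bound (R A b B C D E : ℝ) (hA : 0 < A) (hB : B = b * A - D)
    (hC : C = b ^ 2 * A - 2 * b * D + E) (hE : E ≤ R ^ 2 * A) :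
    C * A - B ^ 2 ≤ 2 * R ^ 2 * A ^ 2 := by
  subst hB hC
  nlinarith [sq_nonneg D, mul_le_mul_of_nonneg_right hE hA.le, sq_nonneg (R * A)]

lemma final_alg (δ R A B C : ℝ) (hδ : 0 < δ) (hA : 0 < A)
    (hCB : C * A - B ^ 2 ≤ 2 * R ^ 2 * A ^ 2) :
    1 / δ - 2 * R ^ 2 / δ ^ 2 ≤
      -(((1 / δ ^ 2 * C - 1 / δ * A) * A - -(1 / δ) * B * (-(1 / δ) * B)) / A ^ 2) := by
  have h1 : (1 / δ ^ 2 * C - 1 / δ * A) * A - -(1 / δ) * B * (-(1 / δ) * B)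
      = ((C * A - B ^ 2) - δ * A ^ 2) / δ ^ 2 := by
    field_simp
    ring
  rw [h1, div_div, ← neg_div, le_div_iff₀ (by positivity)]
  have h2 : (1 / δ - 2 * R ^ 2 / δ ^ 2) * (δ ^ 2 * A ^ 2)
      = δ * A ^ 2 - 2 * R ^ 2 * A ^ 2 := by
    field_simp
  rw [h2]
  linarith

theorem stmt4' (n : ℕ) (hn : 1 ≤ n) (R δ : ℝ) (hR : 0 < R) (hδ : 0 < δ)
    (μ : Measure (EuclideanSpace ℝ (Fin n))) [IsProbabilityMeasure μ]
    (hsupp : μ (Metric.closedBall 0 R)ᶜ = 0) :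
    ∀ x X : EuclideanSpace ℝ (Fin n), ‖X‖ = 1 →
      1 / δ - 2 * R ^ 2 / δ ^ 2 ≤
        iteratedDeriv 2 (fun t : ℝ => -Real.log (∫ y, gs n δ x X t y ∂μ)) 0 := by
  intro x X hX
  set c0 : ℝ := (2 * π * δ) ^ (-(n : ℝ) / 2) with hc0def
  have hc0 : 0 < c0 := Real.rpow_pos_of_pos (by positivity) _
  -- a.e. support bound
  have haeR : ∀ᵐ y ∂μ, ‖y‖ ≤ R := by
    rw [ae_iff]
    have : {y : EuclideanSpace ℝ (Fin n) | ¬ ‖y‖ ≤ R} = (Metric.closedBall 0 R)ᶜ := by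
      ext y; simp [Metric.mem_closedBall, dist_zero_right]
    rw [this]; exact hsupp
  -- integrability of gs, gs1, gs2 at each t
  have hInt : ∀ t, Integrable (fun y => gs n δ x X t y) μ := by
    intro t
    refine Integrable.mono' (integrable_const c0) (cont_gs n δ x X t).aestronglyMeasurable ?_
    filter_upwards with y
    rw [Real.norm_eq_abs, abs_of_pos (gs_pos n hδ x X t y)]
    exact gs_le n hδ x X t y
  have hInt1 : ∀ t, Integrable (fun y => gs1 n δ x X t y) μ := by
    intro t
    refine Integrable.mono' (integrable_const (c0 * ((‖x‖ + |t| + R) / δ)))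
      (cont_gs1 n δ x X t).aestronglyMeasurable ?_
    filter_upwards [haeR] with y hy
    rw [gs1, Real.norm_eq_abs, abs_mul]
    have h1 : |gs n δ x X t y| ≤ c0 := by
      rw [abs_of_pos (gs_pos n hδ x X t y)]; exact gs_le n hδ x X t y
    have h2 : |(-(inner ℝ X (x + t • X - y) : ℝ) / δ)| ≤ (‖x‖ + |t| + R) / δ := by
      rw [abs_div, abs_neg, abs_of_pos hδ]
      gcongr
      exact (abs_inner_line n x X y t hX).trans (norm_line_le n x X y t hX hy)
    exact mul_le_mul h1 h2 (abs_nonneg _) hc0.le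
  have hInt2 : ∀ t, Integrable (fun y => gs2 n δ x X t y) μ := by
    intro t
    refine Integrable.mono' (integrable_const (c0 * ((‖x‖ + |t| + R) ^ 2 / δ ^ 2 + 1 / δ)))
      (cont_gs2 n δ x X t).aestronglyMeasurable ?_
    filter_upwards [haeR] with y hy
    rw [gs2, Real.norm_eq_abs, abs_mul]
    have h1 : |gs n δ x X t y| ≤ c0 := by
      rw [abs_of_pos (gs_pos n hδ x X t y)]; exact gs_le n hδ x X t y
    have ha : |(inner ℝ X (x + t • X - y) : ℝ)| ≤ ‖x‖ + |t| + R :=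
      (abs_inner_line n x X y t hX).trans (norm_line_le n x X y t hX hy)
    have h2 : |(inner ℝ X (x + t • X - y) : ℝ) ^ 2 / δ ^ 2 - 1 / δ|
        ≤ (‖x‖ + |t| + R) ^ 2 / δ ^ 2 + 1 / δ := by
      have hsq : (inner ℝ X (x + t • X - y) : ℝ) ^ 2 / δ ^ 2
          ≤ (‖x‖ + |t| + R) ^ 2 / δ ^ 2 := by
        rw [← sq_abs]
        gcongr
      refine (abs_sub _ _).trans ?_
      rw [abs_of_nonneg (by positivity : (0:ℝ) ≤ (inner ℝ X (x + t • X - y) : ℝ) ^ 2 / δ ^ 2),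
        abs_of_pos (by positivity : (0:ℝ) < 1 / δ)]
      linarith
    exact mul_le_mul h1 h2 (abs_nonneg _) hc0.le
  -- derivative of f under the integral
  have hder : ∀ t, HasDerivAt (fun s => ∫ y, gs n δ x X s y ∂μ)
      (∫ y, gs1 n δ x X t y ∂μ) t := by
    intro t
    have := hasDerivAt_integral_of_dominated_loc_of_deriv_le (μ := μ)
      (F := fun s y => gs n δ x X s y) (F' := fun s y => gs1 n δ x X s y)
      (x₀ := t) (bound := fun _ => c0 * ((‖x‖ + (|t| + 1) + R) / δ)) (Metric.ball_mem_nhds t one_pos)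
      (Filter.Eventually.of_forall fun s => (cont_gs n δ x X s).aestronglyMeasurable)
      (hInt t) (cont_gs1 n δ x X t).aestronglyMeasurable ?_ (integrable_const _)
      (Filter.Eventually.of_forall fun y s _ => hasDerivAt_gs n δ hδ x X y s)
    · exact this.2
    · filter_upwards [haeR] with y hy s hs
      rw [gs1, Real.norm_eq_abs, abs_mul]
      have h1 : |gs n δ x X s y| ≤ c0 := by
        rw [abs_of_pos (gs_pos n hδ x X s y)]; exact gs_le n hδ x X s y
      have hst : |s| ≤ |t| + 1 := by
        have := Metric.mem_ball.mp hs
        rw [Real.dist_eq] at this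
        calc |s| = |t + (s - t)| := by ring_nf
          _ ≤ |t| + |s - t| := abs_add_le _ _
          _ ≤ |t| + 1 := by linarith
      have h2 : |(-(inner ℝ X (x + s • X - y) : ℝ) / δ)| ≤ (‖x‖ + (|t| + 1) + R) / δ := by
        rw [abs_div, abs_neg, abs_of_pos hδ]
        gcongr
        refine (abs_inner_line n x X y s hX).trans
          ((norm_line_le n x X y s hX hy).trans ?_)
        linarith
      exact mul_le_mul h1 h2 (abs_nonneg _) hc0.le
  have hder1 : ∀ t, HasDerivAt (fun s => ∫ y, gs1 n δ x X s y ∂μ)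
      (∫ y, gs2 n δ x X t y ∂μ) t := by
    intro t
    have := hasDerivAt_integral_of_dominated_loc_of_deriv_le (μ := μ)
      (F := fun s y => gs1 n δ x X s y) (F' := fun s y => gs2 n δ x X s y)
      (x₀ := t) (bound := fun _ => c0 * ((‖x‖ + (|t| + 1) + R) ^ 2 / δ ^ 2 + 1 / δ)) (Metric.ball_mem_nhds t one_pos)
      (Filter.Eventually.of_forall fun s => (cont_gs1 n δ x X s).aestronglyMeasurable)
      (hInt1 t) (cont_gs2 n δ x X t).aestronglyMeasurable ?_ (integrable_const _)
      (Filter.Eventually.of_forall fun y s _ => hasDerivAt_gs1 n δ hδ x X y hX s)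
    · exact this.2
    · filter_upwards [haeR] with y hy s hs
      rw [gs2, Real.norm_eq_abs, abs_mul]
      have h1 : |gs n δ x X s y| ≤ c0 := by
        rw [abs_of_pos (gs_pos n hδ x X s y)]; exact gs_le n hδ x X s y
      have hst : |s| ≤ |t| + 1 := by
        have := Metric.mem_ball.mp hs
        rw [Real.dist_eq] at this
        calc |s| = |t + (s - t)| := by ring_nf
          _ ≤ |t| + |s - t| := abs_add_le _ _
          _ ≤ |t| + 1 := by linarith
      have ha : |(inner ℝ X (x + s • X - y) : ℝ)| ≤ ‖x‖ + (|t| + 1) + R := by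
        refine (abs_inner_line n x X y s hX).trans
          ((norm_line_le n x X y s hX hy).trans ?_)
        linarith
      have h2 : |(inner ℝ X (x + s • X - y) : ℝ) ^ 2 / δ ^ 2 - 1 / δ|
          ≤ (‖x‖ + (|t| + 1) + R) ^ 2 / δ ^ 2 + 1 / δ := by
        have hsq : (inner ℝ X (x + s • X - y) : ℝ) ^ 2 / δ ^ 2
            ≤ (‖x‖ + (|t| + 1) + R) ^ 2 / δ ^ 2 := by
          rw [← sq_abs]
          gcongr
        refine (abs_sub _ _).trans ?_
        rw [abs_of_nonneg (by positivity : (0:ℝ) ≤ (inner ℝ X (x + s • X - y) : ℝ) ^ 2 / δ ^ 2),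
          abs_of_pos (by positivity : (0:ℝ) < 1 / δ)]
        linarith
      exact mul_le_mul h1 h2 (abs_nonneg _) hc0.le
  -- positivity of f
  have hfpos : ∀ t, 0 < ∫ y, gs n δ x X t y ∂μ := by
    intro t
    have hlb : ∀ᵐ y ∂μ, c0 * Real.exp (-(‖x‖ + |t| + R) ^ 2 / (2 * δ)) ≤ gs n δ x X t y := by
      filter_upwards [haeR] with y hy
      rw [gs]
      gcongr c0 * Real.exp ?_
      rw [div_le_div_iff_of_pos_right (by positivity : (0:ℝ) < 2 * δ)]
      have h1 := norm_line_le n x X y t hX hy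
      have h2 := norm_nonneg (x + t • X - y)
      nlinarith
    have := integral_mono_ae (integrable_const _) (hInt t) hlb
    calc (0:ℝ) < c0 * Real.exp (-(‖x‖ + |t| + R) ^ 2 / (2 * δ)) := by positivity
      _ = ∫ _, c0 * Real.exp (-(‖x‖ + |t| + R) ^ 2 / (2 * δ)) ∂μ := by
          simp
      _ ≤ _ := this
  -- first derivative of -log f everywhere
  have hV : ∀ t, HasDerivAt (fun t => -Real.log (∫ y, gs n δ x X t y ∂μ))
      (-((∫ y, gs1 n δ x X t y ∂μ) / (∫ y, gs n δ x X t y ∂μ))) t := fun t =>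
    ((hder t).log (hfpos t).ne').neg
  have hDV : deriv (fun t => -Real.log (∫ y, gs n δ x X t y ∂μ))
      = fun t => -((∫ y, gs1 n δ x X t y ∂μ) / (∫ y, gs n δ x X t y ∂μ)) :=
    funext fun t => (hV t).deriv
  have hsecond : HasDerivAt
      (fun t => -((∫ y, gs1 n δ x X t y ∂μ) / (∫ y, gs n δ x X t y ∂μ)))
      (-(((∫ y, gs2 n δ x X 0 y ∂μ) * (∫ y, gs n δ x X 0 y ∂μ)
        - (∫ y, gs1 n δ x X 0 y ∂μ) * (∫ y, gs1 n δ x X 0 y ∂μ))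
        / (∫ y, gs n δ x X 0 y ∂μ) ^ 2)) 0 :=
    ((hder1 0).div (hder 0) (hfpos 0).ne').neg
  rw [iteratedDeriv_succ, iteratedDeriv_one, hDV, hsecond.deriv]
  -- integrability of the moment integrands at t = 0
  have hbnd0 : ∀ᵐ y ∂μ, |(inner ℝ X (x + (0:ℝ) • X - y) : ℝ)| ≤ ‖x‖ + |(0:ℝ)| + R := by
    filter_upwards [haeR] with y hy
    exact (abs_inner_line n x X y 0 hX).trans (norm_line_le n x X y 0 hX hy)
  have hbndc : ∀ᵐ y ∂μ, |(inner ℝ X y : ℝ)| ≤ R := by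
    filter_upwards [haeR] with y hy
    calc |(inner ℝ X y : ℝ)| ≤ ‖X‖ * ‖y‖ := abs_real_inner_le_norm _ _
      _ ≤ R := by rw [hX, one_mul]; exact hy
  have habsgs : ∀ y, |gs n δ x X 0 y| ≤ c0 := fun y => by
    rw [abs_of_pos (gs_pos n hδ x X 0 y)]; exact gs_le n hδ x X 0 y
  have contc : Continuous (fun y : EuclideanSpace ℝ (Fin n) => (inner ℝ X y : ℝ)) :=
    continuous_const.inner continuous_id
  have hIwa : Integrable (fun y => gs n δ x X 0 y * (inner ℝ X (x + (0:ℝ) • X - y) : ℝ)) μ := by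
    refine Integrable.mono' (integrable_const (c0 * (‖x‖ + |(0:ℝ)| + R)))
      ((cont_gs n δ x X 0).mul (cont_inner_line n x X 0)).aestronglyMeasurable ?_
    filter_upwards [hbnd0] with y hy
    rw [Real.norm_eq_abs, abs_mul]
    exact mul_le_mul (habsgs y) hy (abs_nonneg _) hc0.le
  have hIwa2 : Integrable
      (fun y => gs n δ x X 0 y * (inner ℝ X (x + (0:ℝ) • X - y) : ℝ) ^ 2) μ := by
    refine Integrable.mono' (integrable_const (c0 * (‖x‖ + |(0:ℝ)| + R) ^ 2))
      ((cont_gs n δ x X 0).mul ((cont_inner_line n x X 0).pow 2)).aestronglyMeasurable ?_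
    filter_upwards [hbnd0] with y hy
    rw [Real.norm_eq_abs, abs_mul]
    refine mul_le_mul (habsgs y) ?_ (abs_nonneg _) hc0.le
    rw [abs_pow]
    gcongr
  have hIwc : Integrable (fun y => gs n δ x X 0 y * (inner ℝ X y : ℝ)) μ := by
    refine Integrable.mono' (integrable_const (c0 * R))
      ((cont_gs n δ x X 0).mul contc).aestronglyMeasurable ?_
    filter_upwards [hbndc] with y hy
    rw [Real.norm_eq_abs, abs_mul]
    exact mul_le_mul (habsgs y) hy (abs_nonneg _) hc0.le
  have hIwc2 : Integrable (fun y => gs n δ x X 0 y * (inner ℝ X y : ℝ) ^ 2) μ := by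
    refine Integrable.mono' (integrable_const (c0 * R ^ 2))
      ((cont_gs n δ x X 0).mul (contc.pow 2)).aestronglyMeasurable ?_
    filter_upwards [hbndc] with y hy
    rw [Real.norm_eq_abs, abs_mul, abs_pow]
    refine mul_le_mul (habsgs y) ?_ (by positivity) hc0.le
    gcongr
  -- express ∫ gs1 0 and ∫ gs2 0 via the moments
  have hB1 : (∫ y, gs1 n δ x X 0 y ∂μ)
      = -(1/δ) * ∫ y, gs n δ x X 0 y * (inner ℝ X (x + (0:ℝ) • X - y) : ℝ) ∂μ := by
    have hpt : ∀ y, gs1 n δ x X 0 y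
        = -(1/δ) * (gs n δ x X 0 y * (inner ℝ X (x + (0:ℝ) • X - y) : ℝ)) := fun y => by
      rw [gs1]; ring
    simp_rw [hpt]
    rw [integral_const_mul _ _]
  have hC1 : (∫ y, gs2 n δ x X 0 y ∂μ)
      = 1/δ^2 * (∫ y, gs n δ x X 0 y * (inner ℝ X (x + (0:ℝ) • X - y) : ℝ) ^ 2 ∂μ)
        - 1/δ * (∫ y, gs n δ x X 0 y ∂μ) := by
    have hpt : ∀ y, gs2 n δ x X 0 y
        = 1/δ^2 * (gs n δ x X 0 y * (inner ℝ X (x + (0:ℝ) • X - y) : ℝ) ^ 2)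
          - 1/δ * gs n δ x X 0 y := fun y => by
      rw [gs2]; ring
    simp_rw [hpt]
    rw [integral_sub (hIwa2.const_mul _) ((hInt 0).const_mul _), integral_const_mul _ _,
      integral_const_mul _ _]
  rw [hB1, hC1]
  -- centering
  have hBexp : (∫ y, gs n δ x X 0 y * (inner ℝ X (x + (0:ℝ) • X - y) : ℝ) ∂μ)
      = (inner ℝ X (x + (0:ℝ) • X) : ℝ) * (∫ y, gs n δ x X 0 y ∂μ)
        - ∫ y, gs n δ x X 0 y * (inner ℝ X y : ℝ) ∂μ := by
    have hpt : ∀ y, gs n δ x X 0 y * (inner ℝ X (x + (0:ℝ) • X - y) : ℝ)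
        = (inner ℝ X (x + (0:ℝ) • X) : ℝ) * gs n δ x X 0 y
          - gs n δ x X 0 y * (inner ℝ X y : ℝ) := fun y => by
      rw [inner_sub_right]; ring
    simp_rw [hpt]
    rw [integral_sub ((hInt 0).const_mul _) hIwc, integral_const_mul _ _]
  have hCexp : (∫ y, gs n δ x X 0 y * (inner ℝ X (x + (0:ℝ) • X - y) : ℝ) ^ 2 ∂μ)
      = (inner ℝ X (x + (0:ℝ) • X) : ℝ) ^ 2 * (∫ y, gs n δ x X 0 y ∂μ)
        - 2 * (inner ℝ X (x + (0:ℝ) • X) : ℝ) * (∫ y, gs n δ x X 0 y * (inner ℝ X y : ℝ) ∂μ)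
        + ∫ y, gs n δ x X 0 y * (inner ℝ X y : ℝ) ^ 2 ∂μ := by
    have hpt : ∀ y, gs n δ x X 0 y * (inner ℝ X (x + (0:ℝ) • X - y) : ℝ) ^ 2
        = ((inner ℝ X (x + (0:ℝ) • X) : ℝ) ^ 2 * gs n δ x X 0 y
          - (2 * (inner ℝ X (x + (0:ℝ) • X) : ℝ)) * (gs n δ x X 0 y * (inner ℝ X y : ℝ)))
          + gs n δ x X 0 y * (inner ℝ X y : ℝ) ^ 2 := fun y => by
      rw [inner_sub_right]; ring
    simp_rw [hpt]
    have hIsub : Integrable (fun y => (inner ℝ X (x + (0:ℝ) • X) : ℝ) ^ 2 * gs n δ x X 0 y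
        - (2 * (inner ℝ X (x + (0:ℝ) • X) : ℝ)) * (gs n δ x X 0 y * (inner ℝ X y : ℝ))) μ :=
      ((hInt 0).const_mul _).sub (hIwc.const_mul _)
    rw [integral_add hIsub hIwc2,
      integral_sub ((hInt 0).const_mul _) (hIwc.const_mul _), integral_const_mul _ _,
      integral_const_mul _ _]
  have hE : (∫ y, gs n δ x X 0 y * (inner ℝ X y : ℝ) ^ 2 ∂μ)
      ≤ R ^ 2 * ∫ y, gs n δ x X 0 y ∂μ := by
    have hmono : (∫ y, gs n δ x X 0 y * (inner ℝ X y : ℝ) ^ 2 ∂μ)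
        ≤ ∫ y, R ^ 2 * gs n δ x X 0 y ∂μ := by
      refine integral_mono_ae hIwc2 ((hInt 0).const_mul _) ?_
      filter_upwards [hbndc] with y hy
      have hsq : (inner ℝ X y : ℝ) ^ 2 ≤ R ^ 2 := by
        rw [← sq_abs]
        gcongr
      calc gs n δ x X 0 y * (inner ℝ X y : ℝ) ^ 2
          ≤ gs n δ x X 0 y * R ^ 2 :=
            mul_le_mul_of_nonneg_left hsq (gs_pos n hδ x X 0 y).le
        _ = R ^ 2 * gs n δ x X 0 y := mul_comm _ _
    rwa [integral_const_mul _ _] at hmono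
  exact final_alg δ R _ _ _ hδ (hfpos 0)
    (var_bound R _ (inner ℝ X (x + (0:ℝ) • X) : ℝ) _ _ _ _ (hfpos 0) hBexp hCexp hE)

/-- Hess(V_δ) ≥ (1/δ − 2R²/δ²)·I : the second directional derivative of
V_δ = −log p_δ at any point x in any unit direction X is at least 1/δ − 2R²/δ². -/
theorem stmt4 (n : ℕ) (hn : 1 ≤ n) (R δ : ℝ) (hR : 0 < R) (hδ : 0 < δ)
    (μ : Measure (EuclideanSpace ℝ (Fin n))) [IsProbabilityMeasure μ]
    (hsupp : μ (Metric.closedBall 0 R)ᶜ = 0) :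
    ∀ x X : EuclideanSpace ℝ (Fin n), ‖X‖ = 1 →
      1 / δ - 2 * R ^ 2 / δ ^ 2 ≤
        iteratedDeriv 2 (fun t : ℝ => -Real.log (pdeltan n δ μ (x + t • X))) 0 := by
  intro x X hX
  have h := stmt4' n hn R δ hR hδ μ hsupp x X hX
  have heq : (fun t : ℝ => -Real.log (pdeltan n δ μ (x + t • X)))
      = fun t : ℝ => -Real.log (∫ y, gs n δ x X t y ∂μ) := rfl
  rw [heq]
  exact h
end

section
/- For every x ≥ 0, the following two Gaussian integral estimates hold: ∫_x^∞ exp(−u²/2) du ≥ (1/(x+1)) · exp(−x²/2), and ∫_0^x exp(u²/2) du ≤ (2x/(x²+1)) · exp(x²/2). -/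
open MeasureTheory Real Filter Topology

private lemma FderivAux (u : ℝ) (hu : (0:ℝ) ≤ u) :
    HasDerivAt (fun v : ℝ => -(Real.exp (-(v ^ 2) / 2) * (v + 1)⁻¹))
      (Real.exp (-(u ^ 2) / 2) * ((u ^ 2 + u + 1) / (u + 1) ^ 2)) u := by
  have hne : u + 1 ≠ 0 := by positivity
  have h1 : HasDerivAt (fun v : ℝ => Real.exp (-(v ^ 2) / 2)) (Real.exp (-(u ^ 2) / 2) * (-u)) u := by
    have : HasDerivAt (fun v : ℝ => -(v ^ 2) / 2) (-u) u := by
      have := ((hasDerivAt_pow 2 u).neg).div_const 2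
      refine this.congr_deriv ?_; push_cast; ring
    exact (Real.hasDerivAt_exp _).comp u this
  have h2 : HasDerivAt (fun v : ℝ => (v + 1)⁻¹) (-1 / (u + 1) ^ 2) u := by
    have := ((hasDerivAt_id u).add_const 1).inv hne; simp at this; exact this
  have := (h1.mul h2).neg
  refine this.congr_deriv ?_
  field_simp
  ring

private lemma GderivAux (u : ℝ) :
    HasDerivAt (fun v : ℝ => 2 * v / (v ^ 2 + 1) * Real.exp (v ^ 2 / 2))
      (Real.exp (u ^ 2 / 2) * ((2 + 2 * u ^ 4) / (u ^ 2 + 1) ^ 2)) u := by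
  have hne : u ^ 2 + 1 ≠ 0 := by positivity
  have h1 : HasDerivAt (fun v : ℝ => 2 * v / (v ^ 2 + 1))
      ((2 * (u ^ 2 + 1) - 2 * u * (2 * u)) / (u ^ 2 + 1) ^ 2) u := by
    have ha : HasDerivAt (fun v : ℝ => 2 * v) 2 u := by
      simpa using (hasDerivAt_id u).const_mul 2
    have hb : HasDerivAt (fun v : ℝ => v ^ 2 + 1) (2 * u) u := by
      have := (hasDerivAt_pow 2 u).add_const 1
      refine this.congr_deriv ?_; push_cast; ring
    exact ha.div hb hne
  have h2 : HasDerivAt (fun v : ℝ => Real.exp (v ^ 2 / 2)) (Real.exp (u ^ 2 / 2) * u) u := by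
    have : HasDerivAt (fun v : ℝ => v ^ 2 / 2) u u := by
      have := (hasDerivAt_pow 2 u).div_const 2
      refine this.congr_deriv ?_; push_cast; ring
    exact (Real.hasDerivAt_exp _).comp u this
  have := h1.mul h2
  refine this.congr_deriv ?_
  field_simp
  ring

private lemma expInt : Integrable (fun u : ℝ => Real.exp (-(u ^ 2) / 2)) := by
  have h : (fun u : ℝ => Real.exp (-(u ^ 2) / 2)) = fun u => Real.exp (-(1/2 : ℝ) * u ^ 2) := by
    funext u; ring_nf
  rw [h]
  exact integrable_exp_neg_mul_sq (by norm_num)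

theorem stmt8 (x : ℝ) (hx : 0 ≤ x) :
    ((1 / (x + 1)) * Real.exp (-(x ^ 2) / 2) ≤ ∫ u in Set.Ici x, Real.exp (-(u ^ 2) / 2)) ∧
    (∫ u in Set.Icc 0 x, Real.exp (u ^ 2 / 2)) ≤ (2 * x / (x ^ 2 + 1)) * Real.exp (x ^ 2 / 2) := by
  constructor
  · -- first part
    set F : ℝ → ℝ := fun v => -(Real.exp (-(v ^ 2) / 2) * (v + 1)⁻¹) with hF
    set f' : ℝ → ℝ := fun u => Real.exp (-(u ^ 2) / 2) * ((u ^ 2 + u + 1) / (u + 1) ^ 2) with hf'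
    have hbound : ∀ u ∈ Set.Ioi x, f' u ≤ Real.exp (-(u ^ 2) / 2) := by
      intro u hu
      have hu0 : (0:ℝ) ≤ u := le_trans hx (le_of_lt hu)
      have hfrac : (u ^ 2 + u + 1) / (u + 1) ^ 2 ≤ 1 := by
        rw [div_le_one (by positivity)]; nlinarith
      calc f' u ≤ Real.exp (-(u ^ 2) / 2) * 1 :=
            mul_le_mul_of_nonneg_left hfrac (Real.exp_pos _).le
        _ = _ := by ring
    have hf'int : IntegrableOn f' (Set.Ioi x) := by
      apply Integrable.mono' (expInt.integrableOn)
      · apply Measurable.aestronglyMeasurable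
        fun_prop
      · filter_upwards [ae_restrict_mem measurableSet_Ioi] with u hu
        have hu0 : (0:ℝ) ≤ u := le_trans hx (le_of_lt hu)
        rw [Real.norm_eq_abs, abs_of_nonneg (by positivity)]
        exact hbound u hu
    have htend : Tendsto F atTop (𝓝 0) := by
      have h1 : Tendsto (fun v : ℝ => Real.exp (-(v ^ 2) / 2)) atTop (𝓝 0) := by
        apply Real.tendsto_exp_atBot.comp
        apply Filter.Tendsto.atBot_div_const (by norm_num)
        exact tendsto_neg_atBot_iff.mpr (tendsto_pow_atTop (by norm_num))
      have h2 : Tendsto (fun v : ℝ => (v + 1)⁻¹) atTop (𝓝 0) :=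
        tendsto_inv_atTop_zero.comp (tendsto_atTop_add_const_right _ 1 tendsto_id)
      have := (h1.mul h2).neg
      simpa using this
    have hcont : ContinuousOn F (Set.Ici x) := by
      apply ContinuousOn.neg
      apply ContinuousOn.mul (Continuous.continuousOn (by fun_prop))
      apply ContinuousOn.inv₀ (Continuous.continuousOn (by fun_prop))
      intro u hu
      have : (0:ℝ) ≤ u := le_trans hx hu
      positivity
    have key : ∫ u in Set.Ioi x, f' u = 0 - F x :=
      integral_Ioi_of_hasDerivAt_of_tendsto (hcont x Set.self_mem_Ici)
        (fun u hu => FderivAux u (le_trans hx (le_of_lt hu))) hf'int htend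
    have hFx : 0 - F x = 1 / (x + 1) * Real.exp (-(x ^ 2) / 2) := by
      simp only [hF]; field_simp; ring
    rw [MeasureTheory.integral_Ici_eq_integral_Ioi]
    calc 1 / (x + 1) * Real.exp (-(x ^ 2) / 2) = ∫ u in Set.Ioi x, f' u := by rw [key, hFx]
      _ ≤ _ := setIntegral_mono_on hf'int expInt.integrableOn measurableSet_Ioi hbound
  · -- second part
    set g' : ℝ → ℝ := fun u => Real.exp (u ^ 2 / 2) * ((2 + 2 * u ^ 4) / (u ^ 2 + 1) ^ 2) with hg'
    have hbound : ∀ u ∈ Set.Icc 0 x, Real.exp (u ^ 2 / 2) ≤ g' u := by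
      intro u _
      have hfrac : (1:ℝ) ≤ (2 + 2 * u ^ 4) / (u ^ 2 + 1) ^ 2 := by
        rw [le_div_iff₀ (by positivity)]; nlinarith [sq_nonneg (u ^ 2 - 1)]
      calc Real.exp (u ^ 2 / 2) = Real.exp (u ^ 2 / 2) * 1 := by ring
        _ ≤ g' u := mul_le_mul_of_nonneg_left hfrac (Real.exp_pos _).le
    have hI : ∫ u in Set.Icc 0 x, Real.exp (u ^ 2 / 2) = ∫ u in (0:ℝ)..x, Real.exp (u ^ 2 / 2) := by
      rw [intervalIntegral.integral_of_le hx, MeasureTheory.integral_Icc_eq_integral_Ioc]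
    have hcont1 : Continuous fun u : ℝ => Real.exp (u ^ 2 / 2) := by fun_prop
    have hcont2 : Continuous g' := by
      apply Continuous.mul (by fun_prop)
      apply Continuous.div (by fun_prop) (by fun_prop)
      intro u; positivity
    have hftc : ∫ u in (0:ℝ)..x, g' u = 2 * x / (x ^ 2 + 1) * Real.exp (x ^ 2 / 2) := by
      have := intervalIntegral.integral_eq_sub_of_hasDerivAt
        (f := fun v : ℝ => 2 * v / (v ^ 2 + 1) * Real.exp (v ^ 2 / 2)) (f' := g')
        (fun u _ => GderivAux u) (hcont2.intervalIntegrable 0 x)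
      rw [this]; norm_num
    rw [hI, ← hftc]
    apply intervalIntegral.integral_mono_on hx (hcont1.intervalIntegrable 0 x)
      (hcont2.intervalIntegrable 0 x)
    exact hbound
end

section
/- Let n ≥ 1, let Y be an n×n random real symmetric matrix, let G be an n×n random real symmetric matrix, independent of Y, whose upper-triangular entries {G_{ij}}_{1 ≤ i ≤ j ≤ n} are independent standard Gaussian random variables, and let δ > 0. Set X = (1/√n) Y and X̃ = (1/√n)(Y + √δ G). Then for every Lipschitz function f : ℝ → ℝ and every ε > 0, ℙ(|∫ f dμ_X − ∫ f dμ_{X̃}| ≥ ε/3) ≤ (9 ‖f‖_Lip² / ε²) · δ. -/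
open MeasureTheory Real
open scoped ENNReal NNReal

/-- The integral of f against the empirical law of eigenvalues of an n×n real symmetric
matrix A: (1/n) ∑ₖ f(λₖ), where λ₁, …, λₙ are the eigenvalues with multiplicity, i.e.
the roots (all real, since A is symmetric) of the characteristic polynomial of A. -/
noncomputable def empInt {n : ℕ} (A : Matrix (Fin n) (Fin n) ℝ) (f : ℝ → ℝ) : ℝ :=
  (n : ℝ)⁻¹ * (Multiset.map f A.charpoly.roots).sum

section Aux

open Matrix Polynomial Finset

variable {n : ℕ}

lemma aux_myIsHermitian {A : Matrix (Fin n) (Fin n) ℝ} (hA : A.IsSymm) : A.IsHermitian := by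
  rwa [Matrix.IsHermitian, conjTranspose_eq_transpose_of_trivial]

lemma aux_charpoly_conj {R : Type*} [CommRing R] {m : Type*} [Fintype m] [DecidableEq m]
    (P D Q : Matrix m m R) (hPQ : P * Q = 1) :
    (P * D * Q).charpoly = D.charpoly := by
  have hmap : ∀ M N : Matrix m m R, (M * N).map (C : R →+* R[X]) = M.map C * N.map C := by
    intro M N
    exact Matrix.map_mul
  have hcm : charmatrix (P * D * Q) = P.map C * charmatrix D * Q.map C := by
    rw [charmatrix, charmatrix, Matrix.mul_sub, Matrix.sub_mul]
    congr 1
    · rw [← (Matrix.scalar_commute (X : R[X]) (fun r => Commute.all X r) (P.map C)).eq,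
        mul_assoc, ← hmap, hPQ]
      simp
    · simp only [RingHom.mapMatrix_apply]
      rw [mul_assoc, ← hmap, ← hmap, mul_assoc]
  rw [Matrix.charpoly, Matrix.charpoly, hcm]
  rw [Matrix.det_mul, Matrix.det_mul, mul_right_comm, ← Matrix.det_mul, ← hmap, hPQ]
  simp

lemma aux_charpoly_roots_symm {A : Matrix (Fin n) (Fin n) ℝ} (hA : A.IsSymm) :
    A.charpoly.roots = Finset.univ.val.map (aux_myIsHermitian hA).eigenvalues := by
  set h := aux_myIsHermitian hA
  have hsp := h.spectral_theorem
  have h1 : A.charpoly = (diagonal h.eigenvalues).charpoly := by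
    conv_lhs => rw [hsp]
    have := aux_charpoly_conj (h.eigenvectorUnitary : Matrix (Fin n) (Fin n) ℝ)
      (diagonal (RCLike.ofReal ∘ h.eigenvalues)) (star (h.eigenvectorUnitary : Matrix (Fin n) (Fin n) ℝ))
      (Matrix.mem_unitaryGroup_iff.mp h.eigenvectorUnitary.2)
    rw [Unitary.conjStarAlgAut_apply, this, RCLike.ofReal_real_eq_id, Function.id_comp]
  rw [h1]
  have h2 : (diagonal h.eigenvalues).charpoly
      = ((Finset.univ.val.map h.eigenvalues).map (fun a => X - C a)).prod := by
    rw [Matrix.charpoly, charmatrix]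
    have : (Matrix.scalar (Fin n) (X : ℝ[X])) - (C : ℝ →+* ℝ[X]).mapMatrix (diagonal h.eigenvalues)
        = diagonal (fun i => X - C (h.eigenvalues i)) := by
      simp only [RingHom.mapMatrix_apply]
      rw [Matrix.scalar, diagonal_map (by simp)]
      ext i j
      by_cases hij : i = j <;> simp [hij, Matrix.diagonal, Matrix.sub_apply]
    rw [this, det_diagonal, Multiset.map_map]
    rw [Finset.prod_eq_multiset_prod]
    rfl
  rw [h2, Polynomial.roots_multiset_prod_X_sub_C]

lemma aux_trace_conj_diag (Wm : Matrix (Fin n) (Fin n) ℝ) (d e : Fin n → ℝ) :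
    trace (diagonal d * Wm * diagonal e * star Wm)
      = ∑ i, ∑ j, d i * e j * (Wm i j)^2 := by
  have h1 : ∀ i, (diagonal d * Wm * diagonal e * star Wm) i i
      = ∑ j, d i * e j * (Wm i j)^2 := by
    intro i
    rw [Matrix.mul_apply]
    refine Finset.sum_congr rfl fun j _ => ?_
    rw [Matrix.mul_diagonal, Matrix.diagonal_mul, Matrix.star_apply, star_trivial]
    ring
  simp only [Matrix.trace, Matrix.diag_apply, h1]

lemma aux_spectral_real {A : Matrix (Fin n) (Fin n) ℝ} (hA : A.IsHermitian) :
    A = (hA.eigenvectorUnitary : Matrix (Fin n) (Fin n) ℝ) * diagonal hA.eigenvalues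
      * star (hA.eigenvectorUnitary : Matrix (Fin n) (Fin n) ℝ) := by
  have := hA.spectral_theorem
  rwa [RCLike.ofReal_real_eq_id, Function.id_comp] at this

lemma aux_trace_herm_mul_eq {A B : Matrix (Fin n) (Fin n) ℝ}
    (hA : A.IsHermitian) (hB : B.IsHermitian) :
    trace (A * B) = ∑ i, ∑ j, hA.eigenvalues i * hB.eigenvalues j *
      (((star (hA.eigenvectorUnitary : Matrix (Fin n) (Fin n) ℝ)) *
        (hB.eigenvectorUnitary : Matrix (Fin n) (Fin n) ℝ)) i j)^2 := by
  set U : Matrix (Fin n) (Fin n) ℝ := (hA.eigenvectorUnitary : Matrix (Fin n) (Fin n) ℝ) with hU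
  set V : Matrix (Fin n) (Fin n) ℝ := (hB.eigenvectorUnitary : Matrix (Fin n) (Fin n) ℝ) with hV
  have hUU : U * star U = 1 := Matrix.mem_unitaryGroup_iff.mp hA.eigenvectorUnitary.2
  have hU'U : star U * U = 1 := Matrix.mem_unitaryGroup_iff'.mp hA.eigenvectorUnitary.2
  have hVV : V * star V = 1 := Matrix.mem_unitaryGroup_iff.mp hB.eigenvectorUnitary.2
  have hAB : A * B = U * (diagonal hA.eigenvalues * (star U * V) * diagonal hB.eigenvalues
      * star (star U * V)) * star U := by
    rw [StarMul.star_mul, star_star]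
    conv_lhs => rw [aux_spectral_real hA, aux_spectral_real hB]
    simp only [Matrix.mul_assoc]
    rw [hUU]
    simp only [Matrix.mul_one]
    rfl
  rw [hAB, Matrix.trace_mul_cycle, ← Matrix.mul_assoc, hU'U, Matrix.one_mul,
    aux_trace_conj_diag]

lemma aux_herm_offdiag_sum {M : Matrix (Fin n) (Fin n) ℝ} (hM : M.IsHermitian) :
    trace (M * M) = ∑ i, ∑ j, (M i j)^2 := by
  simp only [Matrix.trace, Matrix.diag_apply, Matrix.mul_apply]
  refine Finset.sum_congr rfl fun i _ => Finset.sum_congr rfl fun j _ => ?_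
  have : M j i = M i j := by
    conv_lhs => rw [← hM]
    simp [Matrix.conjTranspose_apply]
  rw [this, sq]

lemma aux_hoffman_wielandt {A B : Matrix (Fin n) (Fin n) ℝ}
    (hA : A.IsHermitian) (hB : B.IsHermitian) :
    ∃ σ : Equiv.Perm (Fin n),
      ∑ i, (hA.eigenvalues i - hB.eigenvalues (σ i))^2 ≤ ∑ i, ∑ j, ((A - B) i j)^2 := by
  classical
  set lam := hA.eigenvalues with hlam
  set mu := hB.eigenvalues with hmu
  set U : Matrix (Fin n) (Fin n) ℝ := (hA.eigenvectorUnitary : Matrix (Fin n) (Fin n) ℝ) with hU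
  set V : Matrix (Fin n) (Fin n) ℝ := (hB.eigenvectorUnitary : Matrix (Fin n) (Fin n) ℝ) with hV
  set W : Matrix (Fin n) (Fin n) ℝ := star U * V with hW
  set S : Matrix (Fin n) (Fin n) ℝ := Matrix.of (fun i j => (W i j)^2) with hS
  have hWmem : W ∈ Matrix.unitaryGroup (Fin n) ℝ :=
    mul_mem (Unitary.star_mem hA.eigenvectorUnitary.2) hB.eigenvectorUnitary.2
  have hWW : W * star W = 1 := Matrix.mem_unitaryGroup_iff.mp hWmem
  have hW'W : star W * W = 1 := Matrix.mem_unitaryGroup_iff'.mp hWmem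
  have hSmem : S ∈ doublyStochastic ℝ (Fin n) := by
    rw [mem_doublyStochastic_iff_sum]
    refine ⟨fun i j => sq_nonneg _, fun i => ?_, fun j => ?_⟩
    · have := congrFun (congrFun hWW i) i
      simp only [Matrix.mul_apply, Matrix.one_apply_eq, Matrix.star_apply, star_trivial] at this
      rw [← this]
      exact Finset.sum_congr rfl fun j _ => by simp [hS, sq]
    · have := congrFun (congrFun hW'W j) j
      simp only [Matrix.mul_apply, Matrix.one_apply_eq, Matrix.star_apply, star_trivial] at this
      rw [← this]
      exact Finset.sum_congr rfl fun i _ => by simp [hS, sq]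
  set F : Matrix (Fin n) (Fin n) ℝ → ℝ := fun M => ∑ i, ∑ j, lam i * mu j * M i j with hF
  have hFconvex : ConvexOn ℝ Set.univ F := by
    refine ⟨convex_univ, fun x _ y _ a b _ _ _ => le_of_eq ?_⟩
    simp only [hF, Matrix.add_apply, Matrix.smul_apply, smul_eq_mul, mul_add,
      Finset.sum_add_distrib, Finset.mul_sum]
    congr 1 <;> exact Finset.sum_congr rfl fun i _ => Finset.sum_congr rfl fun j _ => by ring
  have hShull : S ∈ convexHull ℝ {M | ∃ σ : Equiv.Perm (Fin n), σ.permMatrix ℝ = M} := by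
    rw [← doublyStochastic_eq_convexHull_permMatrix]
    exact hSmem
  obtain ⟨P, hP, hFP⟩ := hFconvex.exists_ge_of_mem_convexHull (Set.subset_univ _) hShull
  obtain ⟨σ, rfl⟩ := hP
  have hFperm : F (σ.permMatrix ℝ) = ∑ i, lam i * mu (σ i) := by
    simp only [hF, Equiv.Perm.permMatrix, PEquiv.toMatrix_apply, Equiv.toPEquiv_apply,
      Option.mem_def, Option.some.injEq, mul_ite, mul_one, mul_zero]
    refine Finset.sum_congr rfl fun i _ => ?_
    rw [Finset.sum_ite_eq]
    simp
  have htrAB : trace (A * B) = F S := aux_trace_herm_mul_eq hA hB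
  have htrAA : trace (A * A) = ∑ i, lam i ^ 2 := by
    have := aux_trace_herm_mul_eq hA hA
    rw [this]
    rw [show star (hA.eigenvectorUnitary : Matrix (Fin n) (Fin n) ℝ) *
      (hA.eigenvectorUnitary : Matrix (Fin n) (Fin n) ℝ) = 1 from
      Matrix.mem_unitaryGroup_iff'.mp hA.eigenvectorUnitary.2]
    refine Finset.sum_congr rfl fun i _ => ?_
    rw [Finset.sum_eq_single i]
    · simp [sq, hlam]
    · intro j _ hj
      simp [Matrix.one_apply, (Ne.symm hj)]
    · simp
  have htrBB : trace (B * B) = ∑ i, mu i ^ 2 := by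
    have := aux_trace_herm_mul_eq hB hB
    rw [this]
    rw [show star (hB.eigenvectorUnitary : Matrix (Fin n) (Fin n) ℝ) *
      (hB.eigenvectorUnitary : Matrix (Fin n) (Fin n) ℝ) = 1 from
      Matrix.mem_unitaryGroup_iff'.mp hB.eigenvectorUnitary.2]
    refine Finset.sum_congr rfl fun i _ => ?_
    rw [Finset.sum_eq_single i]
    · simp [sq, hmu]
    · intro j _ hj
      simp [Matrix.one_apply, (Ne.symm hj)]
    · simp
  have hMM : trace ((A - B) * (A - B)) = ∑ i, ∑ j, ((A - B) i j)^2 :=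
    aux_herm_offdiag_sum (hA.sub hB)
  have hexpandM : trace ((A - B) * (A - B))
      = trace (A * A) - 2 * trace (A * B) + trace (B * B) := by
    rw [Matrix.sub_mul, Matrix.mul_sub, Matrix.mul_sub, Matrix.trace_sub, Matrix.trace_sub,
      Matrix.trace_sub, Matrix.trace_mul_comm B A]
    ring
  have hcomp : ∑ i, mu (σ i) ^ 2 = ∑ i, mu i ^ 2 := Equiv.sum_comp σ (fun i => mu i ^ 2)
  have hexpand : ∑ i, (lam i - mu (σ i))^2
      = ∑ i, lam i ^2 + ∑ i, mu (σ i) ^2 - 2 * ∑ i, lam i * mu (σ i) := by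
    rw [Finset.mul_sum, ← Finset.sum_add_distrib, ← Finset.sum_sub_distrib]
    exact Finset.sum_congr rfl fun i _ => by ring
  refine ⟨σ, ?_⟩
  rw [hexpand, hcomp, ← hMM]
  rw [hexpandM, htrAA, htrBB]
  have : trace (A * B) ≤ ∑ i, lam i * mu (σ i) := by
    rw [htrAB, ← hFperm]; exact hFP
  linarith

lemma aux_empInt_eq {A : Matrix (Fin n) (Fin n) ℝ} (hA : A.IsSymm) (f : ℝ → ℝ) :
    empInt A f = (n : ℝ)⁻¹ * ∑ i, f ((aux_myIsHermitian hA).eigenvalues i) := by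
  rw [empInt, aux_charpoly_roots_symm hA, Multiset.map_map]
  rfl

lemma aux_empInt_diff_sq {A B : Matrix (Fin n) (Fin n) ℝ}
    (hA : A.IsSymm) (hB : B.IsSymm) {L : NNReal} {f : ℝ → ℝ} (hf : LipschitzWith L f) :
    (empInt A f - empInt B f)^2 ≤ (L:ℝ)^2 / n * ∑ i, ∑ j, ((A - B) i j)^2 := by
  rcases Nat.eq_zero_or_pos n with hn | hn
  · subst hn
    simp [empInt]
  obtain ⟨σ, hσ⟩ := aux_hoffman_wielandt (aux_myIsHermitian hA) (aux_myIsHermitian hB)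
  set lam := (aux_myIsHermitian hA).eigenvalues with hlam
  set mu := (aux_myIsHermitian hB).eigenvalues with hmu
  set d : Fin n → ℝ := fun i => f (lam i) - f (mu (σ i)) with hd
  set e : Fin n → ℝ := fun i => lam i - mu (σ i) with he
  have hnpos : (0:ℝ) < n := by exact_mod_cast hn
  have h1 : empInt A f - empInt B f = (n:ℝ)⁻¹ * ∑ i, d i := by
    rw [aux_empInt_eq hA f, aux_empInt_eq hB f]
    have h2 : ∑ i, f (mu (σ i)) = ∑ i, f (mu i) := Equiv.sum_comp σ (fun i => f (mu i))
    rw [← mul_sub, ← h2, ← Finset.sum_sub_distrib]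
  have hde : ∀ i, |d i| ≤ (L:ℝ) * |e i| := by
    intro i
    have := hf.dist_le_mul (lam i) (mu (σ i))
    rwa [Real.dist_eq, Real.dist_eq] at this
  have step1 : (∑ i, d i)^2 ≤ (∑ i, |d i|)^2 := by
    rw [← sq_abs (∑ i, d i)]
    exact pow_le_pow_left₀ (abs_nonneg _) (Finset.abs_sum_le_sum_abs d univ) 2
  have step2 : (∑ i, |d i|)^2 ≤ ((L:ℝ) * ∑ i, |e i|)^2 := by
    refine pow_le_pow_left₀ (Finset.sum_nonneg fun i _ => abs_nonneg _) ?_ 2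
    rw [Finset.mul_sum]
    exact Finset.sum_le_sum fun i _ => hde i
  have step3 : (∑ i, |e i|)^2 ≤ (n:ℝ) * ∑ i, e i ^ 2 := by
    have := sq_sum_le_card_mul_sum_sq (s := univ) (f := fun i => |e i|)
    simpa [sq_abs] using this
  have step4 : ∑ i, e i ^ 2 ≤ ∑ i, ∑ j, ((A - B) i j)^2 := hσ
  have hsum_nonneg : (0:ℝ) ≤ ∑ i, ∑ j, ((A - B) i j)^2 :=
    Finset.sum_nonneg fun i _ => Finset.sum_nonneg fun j _ => sq_nonneg _
  rw [h1, mul_pow]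
  calc ((n:ℝ)⁻¹)^2 * (∑ i, d i)^2
      ≤ ((n:ℝ)⁻¹)^2 * ((L:ℝ) * ∑ i, |e i|)^2 := by
        apply mul_le_mul_of_nonneg_left (step1.trans step2) (by positivity)
    _ = ((n:ℝ)⁻¹)^2 * (L:ℝ)^2 * (∑ i, |e i|)^2 := by ring
    _ ≤ ((n:ℝ)⁻¹)^2 * (L:ℝ)^2 * ((n:ℝ) * ∑ i, e i ^ 2) := by
        apply mul_le_mul_of_nonneg_left step3 (by positivity)
    _ ≤ ((n:ℝ)⁻¹)^2 * (L:ℝ)^2 * ((n:ℝ) * ∑ i, ∑ j, ((A - B) i j)^2) := by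
        apply mul_le_mul_of_nonneg_left (by
          exact mul_le_mul_of_nonneg_left step4 (le_of_lt hnpos)) (by positivity)
    _ = (L:ℝ)^2 / n * ∑ i, ∑ j, ((A - B) i j)^2 := by
        field_simp

end Aux

section Gauss

open Set ProbabilityTheory

lemma aux_integral_sq_exp_Ioi : ∫ x in Ioi (0:ℝ), x^2 * rexp (-(1/2) * x^2) = √(π/2) := by
  have h := integral_rpow_mul_exp_neg_mul_rpow (p := 2) (q := 2) (b := 1/2)
    (by norm_num) (by norm_num) (by norm_num)
  have heq : ∀ x ∈ Ioi (0:ℝ), x ^ (2:ℝ) * rexp (-(1/2) * x ^ (2:ℝ))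
      = x^2 * rexp (-(1/2) * x^2) := by
    intro x _
    rw [show ((2:ℝ) = ((2:ℕ):ℝ)) by norm_num, Real.rpow_natCast]
  rw [setIntegral_congr_fun measurableSet_Ioi heq] at h
  rw [h]
  have h32 : ((2:ℝ) + 1)/2 = 1/2 + 1 := by norm_num
  rw [show (-((2:ℝ)+1)/2) = (-(3/2) : ℝ) by norm_num, h32, Real.Gamma_add_one (by norm_num),
    Real.Gamma_one_half_eq]
  have hb : ((1:ℝ)/2) ^ (-(3/2) : ℝ) = 2 * √2 := by
    rw [show ((1:ℝ)/2) = (2:ℝ) ^ (-1:ℝ) by rw [Real.rpow_neg_one]; norm_num,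
      ← Real.rpow_mul (by norm_num)]
    rw [show ((-1:ℝ) * (-(3/2))) = (1 + 1/2 : ℝ) by norm_num,
      Real.rpow_add (by norm_num), Real.rpow_one, ← Real.sqrt_eq_rpow]
  rw [hb, Real.sqrt_div pi_nonneg]
  have h2 : √2 * √2 = 2 := Real.mul_self_sqrt (by norm_num)
  have h2pos : (0:ℝ) < √2 := Real.sqrt_pos.mpr (by norm_num)
  field_simp
  nlinarith [Real.sqrt_nonneg π]

lemma aux_integrable_sq_gauss : Integrable (fun x : ℝ => x^2 * rexp (-(1/2) * x^2)) := by
  have h := integrable_rpow_mul_exp_neg_mul_sq (b := (1/2:ℝ)) (by norm_num) (s := 2) (by norm_num)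
  have : (fun x : ℝ => x ^ (2:ℝ) * rexp (-(1/2) * x^2))
      = fun x : ℝ => x^2 * rexp (-(1/2) * x^2) := by
    funext x
    rw [show ((2:ℝ) = ((2:ℕ):ℝ)) by norm_num, Real.rpow_natCast]
  rwa [this] at h

lemma aux_integral_sq_exp_full : ∫ x : ℝ, x^2 * rexp (-(1/2) * x^2) = √(2*π) := by
  have hint := aux_integrable_sq_gauss
  have hsplit := MeasureTheory.integral_add_compl (measurableSet_Iic (a := (0:ℝ))) hint
  rw [compl_Iic] at hsplit
  have hsym : ∫ x in Iic (0:ℝ), x^2 * rexp (-(1/2) * x^2)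
      = ∫ x in Ioi (0:ℝ), x^2 * rexp (-(1/2) * x^2) := by
    have h := integral_comp_neg_Ioi (0:ℝ) (fun x => x^2 * rexp (-(1/2) * x^2))
    simp only [neg_zero, neg_sq] at h
    exact h.symm
  rw [← hsplit, hsym, aux_integral_sq_exp_Ioi, ← two_mul, Real.sqrt_div pi_nonneg,
    Real.sqrt_mul (by norm_num : (0:ℝ) ≤ 2)]
  have h2 : √2 * √2 = 2 := Real.mul_self_sqrt (by norm_num)
  have h2pos : (0:ℝ) < √2 := Real.sqrt_pos.mpr (by norm_num)
  field_simp
  nlinarith [Real.sqrt_nonneg π]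

lemma aux_lintegral_sq_gaussianReal :
    ∫⁻ x, ENNReal.ofReal (x^2) ∂(gaussianReal 0 1) = 1 := by
  rw [gaussianReal_of_var_ne_zero 0 one_ne_zero,
    lintegral_withDensity_eq_lintegral_mul _ (measurable_gaussianPDF 0 1)
      (Measurable.ennreal_ofReal (by measurability :
        Measurable (fun x : ℝ => x ^ 2)))]
  have hcg : (fun x => (gaussianPDF 0 1 * fun x : ℝ => ENNReal.ofReal (x^2)) x)
      = fun x : ℝ => ENNReal.ofReal (gaussianPDFReal 0 1 x * x^2) := by
    funext x
    simp [gaussianPDF, ← ENNReal.ofReal_mul (gaussianPDFReal_nonneg 0 1 x)]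
  have hfun : ∀ x : ℝ, gaussianPDFReal 0 1 x * x^2
      = (√(2*π))⁻¹ * (x^2 * rexp (-(1/2) * x^2)) := by
    intro x
    rw [gaussianPDFReal]
    push_cast
    rw [mul_one, sub_zero]
    rw [show -x^2/(2*1) = -(1/2) * x^2 by ring]
    ring
  have hInt : Integrable (fun x : ℝ => gaussianPDFReal 0 1 x * x^2) := by
    simp_rw [hfun]
    exact aux_integrable_sq_gauss.const_mul _
  rw [hcg, ← ofReal_integral_eq_lintegral_ofReal hInt (ae_of_all _ (fun x =>
    mul_nonneg (gaussianPDFReal_nonneg 0 1 x) (sq_nonneg x)))]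
  have : ∫ x : ℝ, gaussianPDFReal 0 1 x * x^2 = 1 := by
    simp_rw [hfun]
    rw [integral_const_mul, aux_integral_sq_exp_full]
    rw [inv_mul_cancel₀ (ne_of_gt (Real.sqrt_pos.mpr (by positivity)))]
  rw [this, ENNReal.ofReal_one]

end Gauss

theorem stmt14
(Ω : Type*) [MeasureSpace Ω] [IsProbabilityMeasure (volume : Measure Ω)]
    (n : ℕ) (hn : 1 ≤ n)
    (Y G : Ω → Matrix (Fin n) (Fin n) ℝ)
    (hYmeas : ∀ i j : Fin n, Measurable fun ω => Y ω i j)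
    (hGmeas : ∀ i j : Fin n, Measurable fun ω => G ω i j)
    (hYsymm : ∀ ω, (Y ω).IsSymm) (hGsymm : ∀ ω, (G ω).IsSymm)
    -- the upper-triangular entries of G are independent …
    (hGindep : ProbabilityTheory.iIndepFun
      (fun (p : {p : Fin n × Fin n // p.1 ≤ p.2}) (ω : Ω) => G ω p.1.1 p.1.2) volume)
    -- … standard Gaussian random variables
    (hGdist : ∀ i j : Fin n, i ≤ j →
      Measure.map (fun ω => G ω i j) volume = ProbabilityTheory.gaussianReal 0 1)
    -- G is independent of Y
    (hindep : ProbabilityTheory.IndepFun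
      (fun ω => fun p : Fin n × Fin n => Y ω p.1 p.2)
      (fun ω => fun p : Fin n × Fin n => G ω p.1 p.2) volume)
    (δ : ℝ) (hδ : 0 < δ)
    (f : ℝ → ℝ) (L : NNReal) (hf : LipschitzWith L f)
    (ε : ℝ) (hε : 0 < ε) :
    volume {ω | ε / 3 ≤
        |empInt ((Real.sqrt n)⁻¹ • Y ω) f -
          empInt ((Real.sqrt n)⁻¹ • (Y ω + Real.sqrt δ • G ω)) f|}
      ≤ ENNReal.ofReal (9 * (L : ℝ) ^ 2 / ε ^ 2 * δ) := by
  classical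
  have hnpos : (0:ℝ) < n := by exact_mod_cast Nat.lt_of_lt_of_le Nat.zero_lt_one hn
  set c : ℝ := (L:ℝ)^2 * δ / (n:ℝ)^2 with hc
  have hc0 : 0 ≤ c := by positivity
  set Ssum : Ω → ℝ := fun ω => ∑ i, ∑ j, (G ω i j)^2 with hSsum
  have hSmeas : Measurable Ssum := by
    apply Finset.measurable_sum
    intro i _
    apply Finset.measurable_sum
    intro j _
    exact (hGmeas i j).pow_const 2
  -- pointwise bound
  have hpt : ∀ ω, (empInt ((Real.sqrt n)⁻¹ • Y ω) f -
      empInt ((Real.sqrt n)⁻¹ • (Y ω + Real.sqrt δ • G ω)) f)^2 ≤ c * Ssum ω := by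
    intro ω
    have hAsymm : ((Real.sqrt n)⁻¹ • Y ω).IsSymm := by
      rw [Matrix.IsSymm, Matrix.transpose_smul, (hYsymm ω).eq]
    have hBsymm : ((Real.sqrt n)⁻¹ • (Y ω + Real.sqrt δ • G ω)).IsSymm := by
      rw [Matrix.IsSymm, Matrix.transpose_smul, Matrix.transpose_add, (hYsymm ω).eq,
        Matrix.transpose_smul, (hGsymm ω).eq]
    have h := aux_empInt_diff_sq hAsymm hBsymm hf
    refine h.trans ?_
    have hentry : ∀ i j, ((((Real.sqrt n)⁻¹ • Y ω) -
        ((Real.sqrt n)⁻¹ • (Y ω + Real.sqrt δ • G ω))) i j)^2 = δ / n * (G ω i j)^2 := by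
      intro i j
      have hsqn : (Real.sqrt n) ^ 2 = n := Real.sq_sqrt (le_of_lt hnpos)
      have hsqd : (Real.sqrt δ) ^ 2 = δ := Real.sq_sqrt (le_of_lt hδ)
      have hsn : (0:ℝ) < Real.sqrt n := Real.sqrt_pos.mpr hnpos
      simp only [Matrix.sub_apply, Matrix.smul_apply, Matrix.add_apply, smul_eq_mul]
      rw [show (Real.sqrt n)⁻¹ * Y ω i j -
        (Real.sqrt n)⁻¹ * (Y ω i j + Real.sqrt δ * G ω i j)
          = -((Real.sqrt n)⁻¹ * (Real.sqrt δ * G ω i j)) by ring]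
      rw [neg_pow, mul_pow, mul_pow, hsqd]
      rw [inv_pow, hsqn]
      ring
    have hsum : ∑ i, ∑ j, ((((Real.sqrt n)⁻¹ • Y ω) -
        ((Real.sqrt n)⁻¹ • (Y ω + Real.sqrt δ • G ω))) i j)^2 = δ / n * Ssum ω := by
      rw [hSsum, Finset.mul_sum]
      refine Finset.sum_congr rfl fun i _ => ?_
      rw [Finset.mul_sum]
      exact Finset.sum_congr rfl fun j _ => hentry i j
    rw [hsum, hc]
    rw [show (L:ℝ)^2 / n * (δ / n * Ssum ω) = (L:ℝ)^2 * δ / (n:ℝ)^2 * Ssum ω by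
      field_simp]
  -- per-entry second moments
  have hone : ∀ i j : Fin n, ∫⁻ ω, ENNReal.ofReal ((G ω i j)^2) = 1 := by
    have key : ∀ i j : Fin n, i ≤ j → ∫⁻ ω, ENNReal.ofReal ((G ω i j)^2) = 1 := by
      intro i j hij
      have hmap := hGdist i j hij
      have hmg : Measurable (fun x : ℝ => ENNReal.ofReal (x ^ 2)) :=
        Measurable.ennreal_ofReal (by measurability)
      calc ∫⁻ ω, ENNReal.ofReal ((G ω i j)^2)
          = ∫⁻ x, ENNReal.ofReal (x^2) ∂(Measure.map (fun ω => G ω i j) volume) :=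
            (lintegral_map hmg (hGmeas i j)).symm
        _ = 1 := by rw [hmap, aux_lintegral_sq_gaussianReal]
    intro i j
    rcases le_total i j with hij | hji
    · exact key i j hij
    · simp only [show ∀ ω, G ω i j = G ω j i from fun ω => (hGsymm ω).apply j i]
      exact key j i hji
  -- total lintegral
  have hlin : ∫⁻ ω, ENNReal.ofReal (c * Ssum ω) = ENNReal.ofReal ((L:ℝ)^2 * δ) := by
    have hsplit : ∀ ω, ENNReal.ofReal (c * Ssum ω)
        = ENNReal.ofReal c * ∑ i, ∑ j, ENNReal.ofReal ((G ω i j)^2) := by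
      intro ω
      rw [ENNReal.ofReal_mul hc0, hSsum]
      congr 1
      show ENNReal.ofReal (∑ i, ∑ j, (G ω i j)^2) = _
      rw [ENNReal.ofReal_sum_of_nonneg (f := fun i => ∑ j, (G ω i j)^2) (fun i _ => Finset.sum_nonneg fun j _ => sq_nonneg _)]
      exact Finset.sum_congr rfl fun i _ =>
        ENNReal.ofReal_sum_of_nonneg (fun j _ => sq_nonneg _)
    rw [lintegral_congr hsplit]
    rw [lintegral_const_mul _ (by
      apply Finset.measurable_sum
      intro i _
      apply Finset.measurable_sum
      intro j _
      exact Measurable.ennreal_ofReal ((hGmeas i j).pow_const 2))]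
    rw [lintegral_finset_sum _ (fun i _ => by
      apply Finset.measurable_sum
      intro j _
      exact Measurable.ennreal_ofReal ((hGmeas i j).pow_const 2))]
    have : ∀ i : Fin n, (i ∈ Finset.univ) → ∫⁻ ω, ∑ j, ENNReal.ofReal ((G ω i j)^2)
        = (n : ℝ≥0∞) := by
      intro i _
      rw [lintegral_finset_sum _ (fun j _ =>
        Measurable.ennreal_ofReal ((hGmeas i j).pow_const 2))]
      rw [Finset.sum_congr rfl (fun j _ => hone i j)]
      simp
    rw [Finset.sum_congr rfl this]
    rw [Finset.sum_const, Finset.card_univ, Fintype.card_fin]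
    rw [nsmul_eq_mul, ← ENNReal.ofReal_natCast n,
      ← ENNReal.ofReal_mul (Nat.cast_nonneg n), ← ENNReal.ofReal_mul hc0]
    congr 1
    rw [hc, show ((n:ℝ) * n) = (n:ℝ)^2 by ring,
      div_mul_cancel₀ _ (ne_of_gt (by positivity : (0:ℝ) < (n:ℝ)^2))]
  -- Markov
  set a : ℝ≥0∞ := ENNReal.ofReal ((ε/3)^2) with ha
  have ha0 : a ≠ 0 := by
    rw [ha]
    simp only [ne_eq, ENNReal.ofReal_eq_zero, not_le]
    positivity
  have hatop : a ≠ ⊤ := ENNReal.ofReal_ne_top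
  have hmeasV : Measurable (fun ω => ENNReal.ofReal (c * Ssum ω)) :=
    Measurable.ennreal_ofReal (hSmeas.const_mul c)
  have markov := mul_meas_ge_le_lintegral₀ (μ := volume) hmeasV.aemeasurable a
  have hsub : {ω | ε / 3 ≤
        |empInt ((Real.sqrt n)⁻¹ • Y ω) f -
          empInt ((Real.sqrt n)⁻¹ • (Y ω + Real.sqrt δ • G ω)) f|}
      ⊆ {ω | a ≤ ENNReal.ofReal (c * Ssum ω)} := by
    intro ω hω
    simp only [Set.mem_setOf_eq] at hω ⊢
    rw [ha]
    apply ENNReal.ofReal_le_ofReal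
    calc (ε/3)^2 ≤ |empInt ((Real.sqrt n)⁻¹ • Y ω) f -
          empInt ((Real.sqrt n)⁻¹ • (Y ω + Real.sqrt δ • G ω)) f|^2 :=
        pow_le_pow_left₀ (by positivity) hω 2
      _ = (empInt ((Real.sqrt n)⁻¹ • Y ω) f -
          empInt ((Real.sqrt n)⁻¹ • (Y ω + Real.sqrt δ • G ω)) f)^2 := sq_abs _
      _ ≤ c * Ssum ω := hpt ω
  calc volume {ω | ε / 3 ≤
        |empInt ((Real.sqrt n)⁻¹ • Y ω) f -
          empInt ((Real.sqrt n)⁻¹ • (Y ω + Real.sqrt δ • G ω)) f|}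
      ≤ volume {ω | a ≤ ENNReal.ofReal (c * Ssum ω)} := measure_mono hsub
    _ ≤ (∫⁻ ω, ENNReal.ofReal (c * Ssum ω)) / a := by
        rw [ENNReal.le_div_iff_mul_le (Or.inl ha0) (Or.inl hatop), mul_comm]
        exact markov
    _ = ENNReal.ofReal ((L:ℝ)^2 * δ) / ENNReal.ofReal ((ε/3)^2) := by rw [hlin, ha]
    _ = ENNReal.ofReal (9 * (L : ℝ) ^ 2 / ε ^ 2 * δ) := by
        rw [← ENNReal.ofReal_div_of_pos (by positivity)]
        congr 1
        field_simp
        ring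
end

section
/- Let R > 0, 0 < a ≤ b, and let μ be a probability measure on ℝ with density p with respect to Lebesgue measure such that p(t) = 0 for t ∉ [−R, R] and a ≤ p(t) ≤ b for t ∈ [−R, R]. Then μ satisfies a logarithmic Sobolev inequality with constant c ≤ 2067 · (R/a). -/
open MeasureTheory Real

/-- Centered Gaussian measure on ℝ of variance δ. -/
noncomputable def gaussianMeasure (δ : ℝ) : Measure ℝ :=
  volume.withDensity fun t => ENNReal.ofReal ((Real.sqrt (2 * π * δ))⁻¹ * Real.exp (-(t ^ 2) / (2 * δ)))

/-- Convolution of two measures on ℝ. -/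
noncomputable def mconv (μ ν : Measure ℝ) : Measure ℝ :=
  (μ.prod ν).map fun p => p.1 + p.2

/-- Entropy functional Ent_ν(g) = ∫ g log (g / ∫ g dν) dν. -/
noncomputable def Ent {α : Type*} [MeasurableSpace α] (ν : Measure α) (g : α → ℝ) : ℝ :=
  ∫ x, g x * Real.log (g x / ∫ y, g y ∂ν) ∂ν

/-- ν satisfies a logarithmic Sobolev inequality with constant c:
Ent_ν(f²) ≤ c ∫ |f'|² dν for all smooth compactly supported f : ℝ → ℝ. -/
def SatisfiesLSI (ν : Measure ℝ) (c : ℝ) : Prop :=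
  ∀ f : ℝ → ℝ, ContDiff ℝ (⊤ : ℕ∞) f → HasCompactSupport f →
    Ent ν (fun t => f t ^ 2) ≤ c * ∫ t, deriv f t ^ 2 ∂ν

/-- Cauchy–Schwarz via nonnegativity of the variance. -/
lemma aux_sq_integral_le {ν : Measure ℝ} [IsFiniteMeasure ν] {g : ℝ → ℝ}
    (hg : Integrable g ν) (hg2 : Integrable (fun t => g t ^ 2) ν) :
    (∫ t, g t ∂ν) ^ 2 ≤ (ν Set.univ).toReal * ∫ t, g t ^ 2 ∂ν := by
  set T := (ν Set.univ).toReal with hT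
  have hT0 : 0 ≤ T := ENNReal.toReal_nonneg
  rcases eq_or_lt_of_le hT0 with h0 | hpos
  · have hν : ν = 0 := by
      rcases (ENNReal.toReal_eq_zero_iff _).mp h0.symm with h | h
      · exact Measure.measure_univ_eq_zero.mp h
      · exact absurd h (measure_ne_top ν _)
    simp [hν]
  · set c := (∫ t, g t ∂ν) / T with hc
    have key : (0:ℝ) ≤ ∫ t, (g t - c) ^ 2 ∂ν := integral_nonneg fun t => sq_nonneg _
    have expand : ∫ t, (g t - c) ^ 2 ∂ν
        = ∫ t, g t ^ 2 ∂ν - 2 * c * ∫ t, g t ∂ν + c ^ 2 * T := by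
      have h1 : (fun t => (g t - c) ^ 2)
          = fun t => (g t ^ 2 - 2 * c * g t) + c ^ 2 := by funext t; ring
      have hsub : Integrable (fun t => g t ^ 2 - 2 * c * g t) ν := hg2.sub (hg.const_mul (2*c))
      rw [h1, integral_add hsub (integrable_const _),
        integral_sub hg2 (hg.const_mul (2*c)), integral_const_mul, integral_const]
      simp [hT]
      simp only [Measure.real]; ring
    rw [expand] at key
    have hc' : c * T = ∫ t, g t ∂ν := by rw [hc, div_mul_cancel₀ _ hpos.ne']
    nlinarith [key, hpos]

/-- Integrability of `g ∘ f` for `f` continuous with compact support, `g` continuous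
vanishing at `0`, w.r.t. a finite measure. -/
lemma aux_integrable_comp {μ : Measure ℝ} [IsFiniteMeasure μ] {f g : ℝ → ℝ}
    (hf : Continuous f) (hfc : HasCompactSupport f) (hg : Continuous g) (hg0 : g 0 = 0) :
    Integrable (fun t => g (f t)) μ := by
  have hcs : HasCompactSupport fun t => g (f t) := hfc.comp_left (g := g) hg0
  obtain ⟨C, hC⟩ := hcs.exists_bound_of_continuous (hg.comp hf)
  exact (integrable_const C).mono' ((hg.comp hf).aestronglyMeasurable)
    (Filter.Eventually.of_forall hC)


set_option maxHeartbeats 2000000 in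
theorem stmt17 (R a b : ℝ) (hR : 0 < R) (ha : 0 < a) (hab : a ≤ b)
    (p : ℝ → ℝ) (μ : Measure ℝ) [IsProbabilityMeasure μ]
    (hμ : μ = volume.withDensity fun t => ENNReal.ofReal (p t))
    (hp0 : ∀ t : ℝ, t ∉ Set.Icc (-R) R → p t = 0)
    (hpa : ∀ t ∈ Set.Icc (-R) R, a ≤ p t)
    (hpb : ∀ t ∈ Set.Icc (-R) R, p t ≤ b) :
    SatisfiesLSI μ (2067 * (R / a)) := by
  intro f hf hfc
  set I : Set ℝ := Set.Icc (-R) R with hIdef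
  have hI : MeasurableSet I := measurableSet_Icc
  have hfcont : Continuous f := hf.continuous
  have hf' : Continuous (deriv f) := hf.continuous_deriv (by exact_mod_cast le_top)
  have hf'c : HasCompactSupport (deriv f) := hfc.deriv
  set D := ∫ t, deriv f t ^ 2 ∂μ with hD
  have hD0 : 0 ≤ D := hD ▸ integral_nonneg fun t => sq_nonneg _
  -- μ vanishes off I
  have hμI : μ Iᶜ = 0 := by
    rw [hμ, withDensity_apply _ hI.compl]
    have h0 : ∫⁻ t in Iᶜ, ENNReal.ofReal (p t) ∂volume = ∫⁻ t in Iᶜ, 0 ∂volume := by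
      refine setLIntegral_congr_fun hI.compl (fun t ht => ?_)
      rw [hp0 t ht, ENNReal.ofReal_zero]
    rw [h0, lintegral_zero]
  have hae : ∀ᵐ x ∂μ, x ∈ I := by
    rw [ae_iff]
    exact hμI
  -- measure lower bound a·Leb|_I ≤ μ
  have hmle : (ENNReal.ofReal a) • volume.restrict I ≤ μ := by
    refine Measure.le_iff.mpr fun s hs => ?_
    rw [hμ, withDensity_apply _ hs, Measure.smul_apply, Measure.restrict_apply hs, smul_eq_mul]
    calc ENNReal.ofReal a * volume (s ∩ I)
        = ENNReal.ofReal a * (volume.restrict s) I := by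
          rw [Measure.restrict_apply hI, Set.inter_comm]
      _ = ∫⁻ t in s, I.indicator (fun _ => ENNReal.ofReal a) t ∂volume := by
          rw [lintegral_indicator hI, setLIntegral_const]
      _ ≤ ∫⁻ t in s, ENNReal.ofReal (p t) ∂volume := by
          refine lintegral_mono fun t => ?_
          by_cases ht : t ∈ I
          · simpa [ht] using ENNReal.ofReal_le_ofReal (hpa t ht)
          · simp [ht]
  -- integrability of f'^2
  have hfd2cont : Continuous (fun t => deriv f t ^ 2) := by fun_prop
  have hfd2cs : HasCompactSupport (fun t => deriv f t ^ 2) :=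
    hf'c.comp_left (g := fun u => u ^ 2) (by norm_num)
  have hfd2vol : Integrable (fun t => deriv f t ^ 2) volume :=
    hfd2cont.integrable_of_hasCompactSupport hfd2cs
  have ifd2 : Integrable (fun t => deriv f t ^ 2) μ :=
    aux_integrable_comp hf' hf'c (g := fun u => u ^ 2) (by fun_prop) (by norm_num)
  set QI := ∫ t in I, deriv f t ^ 2 ∂volume with hQI
  have hQI0 : 0 ≤ QI := setIntegral_nonneg hI fun t _ => sq_nonneg _
  have hQa : a * QI ≤ D := by
    have h1 : ∫ t, deriv f t ^ 2 ∂((ENNReal.ofReal a) • volume.restrict I) ≤ D :=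
      integral_mono_measure hmle (Filter.Eventually.of_forall fun t => sq_nonneg _) ifd2
    rw [integral_smul_measure, ENNReal.toReal_ofReal ha.le, smul_eq_mul] at h1
    exact h1
  clear_value D
  set K := 2 * R / a * D with hKdef
  have hK0 : 0 ≤ K := by
    rw [hKdef]; exact mul_nonneg (div_nonneg (by linarith) ha.le) hD0
  clear_value K
  -- gradient bound
  have grad0 : ∀ x ∈ I, ∀ y ∈ I, y ≤ x → (f x - f y) ^ 2 ≤ 2 * R * QI := by
    intro x hx y hy hyx
    have hftc : ∫ t in y..x, deriv f t = f x - f y :=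
      intervalIntegral.integral_deriv_eq_sub
        (fun t _ => (hf.differentiable (by simp)).differentiableAt)
        (hf'.intervalIntegrable y x)
    have hioc : ∫ t in y..x, deriv f t = ∫ t in Set.Ioc y x, deriv f t ∂volume :=
      intervalIntegral.integral_of_le hyx
    haveI hfin : IsFiniteMeasure (volume.restrict (Set.Ioc y x)) := by
      constructor
      rw [Measure.restrict_apply MeasurableSet.univ, Set.univ_inter, Real.volume_Ioc]
      exact ENNReal.ofReal_lt_top
    have hg1 : Integrable (deriv f) (volume.restrict (Set.Ioc y x)) :=
      (hf'.integrable_of_hasCompactSupport hf'c).restrict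
    have hg2 : Integrable (fun t => deriv f t ^ 2) (volume.restrict (Set.Ioc y x)) :=
      hfd2vol.restrict
    have hcs := aux_sq_integral_le hg1 hg2
    have hTval : ((volume.restrict (Set.Ioc y x)) Set.univ).toReal = x - y := by
      rw [Measure.restrict_apply MeasurableSet.univ, Set.univ_inter, Real.volume_Ioc,
        ENNReal.toReal_ofReal (by linarith)]
    rw [hTval] at hcs
    have hsub : ∫ t in Set.Ioc y x, deriv f t ^ 2 ∂volume ≤ QI := by
      refine setIntegral_mono_set hfd2vol.integrableOn
        (Filter.Eventually.of_forall fun t => sq_nonneg _) ?_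
      refine Filter.Eventually.of_forall ?_
      intro t ht
      exact Set.Icc_subset_Icc hy.1 hx.2 (Set.Ioc_subset_Icc_self ht)
    have hioc0 : 0 ≤ ∫ t in Set.Ioc y x, deriv f t ^ 2 ∂volume :=
      setIntegral_nonneg measurableSet_Ioc fun t _ => sq_nonneg _
    have hxy2R : x - y ≤ 2 * R := by
      have := hx.2; have := hy.1; simp only [hIdef, Set.mem_Icc] at *; linarith
    calc (f x - f y) ^ 2 = (∫ t in Set.Ioc y x, deriv f t ∂volume) ^ 2 := by
          rw [← hioc, hftc]
      _ ≤ (x - y) * ∫ t in Set.Ioc y x, deriv f t ^ 2 ∂volume := hcs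
      _ ≤ (2 * R) * QI := by
          apply mul_le_mul hxy2R hsub hioc0 (by linarith)
  have grad : ∀ x ∈ I, ∀ y ∈ I, (f x - f y) ^ 2 ≤ K := by
    have h2RQ : 2 * R * QI ≤ K := by
      rw [hKdef, div_mul_eq_mul_div, le_div_iff₀ ha]
      nlinarith [hQa, hR.le]
    intro x hx y hy
    rcases le_total y x with h | h
    · exact le_trans (grad0 x hx y hy h) h2RQ
    · have := grad0 y hy x hx h
      calc (f x - f y) ^ 2 = (f y - f x) ^ 2 := by ring
        _ ≤ 2 * R * QI := this
        _ ≤ K := h2RQ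
  -- integrability of basic integrands w.r.t. μ
  have hint : ∀ g : ℝ → ℝ, Continuous g → g 0 = 0 → Integrable (fun t => g (f t)) μ :=
    fun g hg hg0 => aux_integrable_comp hfcont hfc hg hg0
  have ih1 : Integrable (fun t => |f t|) μ := hint (fun u => |u|) continuous_abs abs_zero
  have ih2 : Integrable (fun t => |f t| ^ 2) μ :=
    hint (fun u => |u| ^ 2) (by fun_prop) (by norm_num)
  have ih3 : Integrable (fun t => |f t| ^ 3) μ :=
    hint (fun u => |u| ^ 3) (by fun_prop) (by norm_num)
  have if2 : Integrable (fun t => f t ^ 2) μ := hint (fun u => u ^ 2) (by fun_prop) (by norm_num)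
  simp only [Ent]
  set m := ∫ y, f y ^ 2 ∂μ with hm
  have hm0 : 0 ≤ m := hm ▸ integral_nonneg fun y => sq_nonneg _
  clear_value m
  set E := ∫ t, |f t| ∂μ with hE
  have hE0 : 0 ≤ E := hE ▸ integral_nonneg fun t => abs_nonneg _
  clear_value E
  have him2 : ∫ t, |f t| ^ 2 ∂μ = m := by
    rw [hm]; congr 1; funext t; exact sq_abs _
  have hEm : E ^ 2 ≤ m := by
    have h := aux_sq_integral_le ih1 ih2
    rw [him2] at h
    rw [hE]
    simpa [measure_univ] using h
  have hRaD : (0:ℝ) ≤ R / a * D := mul_nonneg (div_nonneg hR.le ha.le) hD0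
  rcases eq_or_lt_of_le hm0 with hm0' | hmpos
  · -- m = 0 : the entropy vanishes
    have hzero : ∀ x : ℝ, f x ^ 2 * Real.log (f x ^ 2 / m) = 0 := by
      intro x; rw [← hm0', div_zero, Real.log_zero, mul_zero]
    calc ∫ x, f x ^ 2 * Real.log (f x ^ 2 / m) ∂μ = ∫ _x, (0:ℝ) ∂μ := by
          simp only [hzero]
      _ = 0 := integral_zero _ _
      _ ≤ 2067 * (R / a) * D := by nlinarith [hRaD]
  -- now m > 0
  have hmne : m ≠ 0 := ne_of_gt hmpos
  have ient : Integrable (fun t => f t ^ 2 * Real.log (f t ^ 2 / m)) μ := by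
    have hgeq : (fun u : ℝ => u ^ 2 * Real.log (u ^ 2 / m))
        = fun u => u ^ 2 * Real.log (u ^ 2) - u ^ 2 * Real.log m := by
      funext u
      by_cases hu : u = 0
      · simp [hu]
      · rw [Real.log_div (pow_ne_zero 2 hu) hmne]; ring
    have hgc : Continuous fun u : ℝ => u ^ 2 * Real.log (u ^ 2 / m) := by
      rw [hgeq]
      exact (Real.continuous_mul_log.comp (continuous_pow 2)).sub
        ((continuous_pow 2).mul continuous_const)
    exact hint _ hgc (by norm_num)
  -- a point where f² is below its mean
  have hne : I.Nonempty := Set.nonempty_Icc.mpr (by linarith)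
  obtain ⟨y₀, hy₀I, hy₀min⟩ := isCompact_Icc.exists_isMinOn hne
    (Continuous.continuousOn (by fun_prop : Continuous fun t => f t ^ 2))
  have hy₀m : f y₀ ^ 2 ≤ m := by
    have hmono : ∫ _x, f y₀ ^ 2 ∂μ ≤ ∫ x, f x ^ 2 ∂μ :=
      integral_mono_ae (integrable_const _) if2 (hae.mono fun x hx => hy₀min hx)
    rw [← hm] at hmono
    simpa [measure_univ] using hmono
  rcases le_or_gt m K with hmK | hKm
  · -- Case m ≤ K : use the uniform bound f² ≤ 4K
    have hKpos : 0 < K := lt_of_lt_of_le hmpos hmK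
    have hsup : ∀ x ∈ I, f x ^ 2 ≤ 4 * K := by
      intro x hx
      have h1 : |f y₀| ≤ Real.sqrt K := Real.abs_le_sqrt (le_trans hy₀m hmK)
      have h2 : |f x - f y₀| ≤ Real.sqrt K := Real.abs_le_sqrt (grad x hx y₀ hy₀I)
      have h3 : |f x| ≤ 2 * Real.sqrt K := by
        calc |f x| = |f y₀ + (f x - f y₀)| := by congr 1; ring
          _ ≤ |f y₀| + |f x - f y₀| := abs_add_le _ _
          _ ≤ 2 * Real.sqrt K := by linarith
      calc f x ^ 2 = |f x| ^ 2 := (sq_abs _).symm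
        _ ≤ (2 * Real.sqrt K) ^ 2 := pow_le_pow_left₀ (abs_nonneg _) h3 2
        _ = 4 * K := by rw [mul_pow, Real.sq_sqrt hK0]; norm_num
    have hstep : ∫ x, f x ^ 2 * Real.log (f x ^ 2 / m) ∂μ
        ≤ ∫ x, f x ^ 2 * Real.log (4 * K / m) ∂μ := by
      refine integral_mono_ae ient (if2.mul_const _) (hae.mono fun x hx => ?_)
      by_cases hfx : f x = 0
      · simp [hfx]
      · have hfx2 : 0 < f x ^ 2 := by positivity
        refine mul_le_mul_of_nonneg_left ?_ (sq_nonneg _)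
        refine Real.log_le_log (by positivity) ?_
        have := hsup x hx
        gcongr
    have hval : ∫ x, f x ^ 2 * Real.log (4 * K / m) ∂μ = m * Real.log (4 * K / m) := by
      rw [integral_mul_const, ← hm, mul_comm]
    have hfin : m * Real.log (4 * K / m) ≤ 4 * K := by
      have hlog : Real.log (4 * K / m) ≤ 4 * K / m - 1 :=
        Real.log_le_sub_one_of_pos (by positivity)
      have h1 : m * Real.log (4 * K / m) ≤ m * (4 * K / m) := by nlinarith [hmpos, hlog]
      have h2 : m * (4 * K / m) = 4 * K := by field_simp
      linarith
    calc ∫ x, f x ^ 2 * Real.log (f x ^ 2 / m) ∂μ ≤ m * Real.log (4 * K / m) := by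
          rw [← hval]; exact hstep
      _ ≤ 4 * K := hfin
      _ ≤ 2067 * (R / a) * D := by
          rw [hKdef]
          have h8 : 2 * R / a * D = 2 * (R / a * D) := by ring
          have h9 : 2067 * (R / a) * D = 2067 * (R / a * D) := by ring
          rw [h8, h9]; linarith [hRaD]
  · -- Case K < m
    set M := Real.sqrt m with hM
    have hMpos : 0 < M := by rw [hM]; exact Real.sqrt_pos.mpr hmpos
    have hM2 : M ^ 2 = m := by rw [hM]; exact Real.sq_sqrt hm0
    have hKM : Real.sqrt K ≤ M := by rw [hM]; exact Real.sqrt_le_sqrt (le_of_lt hKm)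
    clear_value M
    have hEM : E ≤ M := by nlinarith [hEm, hE0, hMpos, hM2]
    -- pointwise bound (|f x| - M)² ≤ K on I
    have hw : ∀ x ∈ I, (|f x| - M) ^ 2 ≤ K := by
      intro x hx
      have h1 : (fun y => (|f x| - |f y|) ^ 2)
          = fun y => (|f y| ^ 2 - (2 * |f x|) * |f y|) + |f x| ^ 2 := by
        funext y; ring
      have hsub1 : Integrable (fun y => |f y| ^ 2 - (2 * |f x|) * |f y|) μ :=
        ih2.sub (ih1.const_mul (2 * |f x|))
      have hintg : Integrable (fun y => (|f x| - |f y|) ^ 2) μ := by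
        rw [h1]; exact hsub1.add (integrable_const _)
      have hexp : ∫ y, (|f x| - |f y|) ^ 2 ∂μ = |f x| ^ 2 - 2 * |f x| * E + m := by
        rw [h1, integral_add hsub1 (integrable_const _),
          integral_sub ih2 (ih1.const_mul (2 * |f x|)), integral_const_mul, integral_const, him2]
        simp [measure_univ, ← hE]
        ring
      have hmono : ∫ y, (|f x| - |f y|) ^ 2 ∂μ ≤ ∫ _y, K ∂μ := by
        refine integral_mono_ae hintg (integrable_const _) (hae.mono fun y hy => ?_)
        have habs : |(|f x| - |f y|)| ≤ |f x - f y| := abs_abs_sub_abs_le_abs_sub _ _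
        calc (|f x| - |f y|) ^ 2 = |(|f x| - |f y|)| ^ 2 := (sq_abs _).symm
          _ ≤ |f x - f y| ^ 2 := pow_le_pow_left₀ (abs_nonneg _) habs 2
          _ = (f x - f y) ^ 2 := sq_abs _
          _ ≤ K := grad x hx y hy
      have hconst : ∫ _y, K ∂μ = K := by simp [measure_univ]
      rw [hexp, hconst] at hmono
      nlinarith [hmono, hM2, mul_nonneg (abs_nonneg (f x)) (sub_nonneg.mpr hEM)]
    have hwb : ∀ x ∈ I, |f x| - M ≤ Real.sqrt K := by
      intro x hx
      exact le_trans (le_abs_self _) (Real.abs_le_sqrt (hw x hx))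
    -- pointwise entropy bound
    have hpt : ∀ x ∈ I, f x ^ 2 * Real.log (f x ^ 2 / m)
        ≤ 2 / M * (|f x| ^ 3 - M * |f x| ^ 2) := by
      intro x _hx
      by_cases hfx : f x = 0
      · simp [hfx]
      · have hax : 0 < |f x| := abs_pos.mpr hfx
        have hlog : Real.log (|f x| / M) ≤ |f x| / M - 1 :=
          Real.log_le_sub_one_of_pos (by positivity)
        have hrw : Real.log (f x ^ 2 / m) = 2 * Real.log (|f x| / M) := by
          rw [← hM2, ← sq_abs (f x), ← div_pow, Real.log_pow]
          norm_num
        rw [hrw, ← sq_abs (f x)]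
        have h2 : |f x| ^ 2 * (2 * Real.log (|f x| / M))
            ≤ |f x| ^ 2 * (2 * (|f x| / M - 1)) := by
          refine mul_le_mul_of_nonneg_left ?_ (sq_nonneg _); linarith
        calc |f x| ^ 2 * (2 * Real.log (|f x| / M)) ≤ |f x| ^ 2 * (2 * (|f x| / M - 1)) := h2
          _ = 2 / M * (|f x| ^ 3 - M * |f x| ^ 2) := by
              field_simp
    set S3 := ∫ t, |f t| ^ 3 ∂μ with hS3
    clear_value S3
    -- integrate the pointwise bound
    have hent_int : ∫ x, f x ^ 2 * Real.log (f x ^ 2 / m) ∂μ ≤ 2 / M * (S3 - M * m) := by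
      have h1 : ∫ x, f x ^ 2 * Real.log (f x ^ 2 / m) ∂μ
          ≤ ∫ x, 2 / M * (|f x| ^ 3 - M * |f x| ^ 2) ∂μ :=
        integral_mono_ae ient ((ih3.sub (ih2.const_mul M)).const_mul _)
          (hae.mono fun x hx => hpt x hx)
      have h2 : ∫ x, 2 / M * (|f x| ^ 3 - M * |f x| ^ 2) ∂μ = 2 / M * (S3 - M * m) := by
        rw [integral_const_mul, integral_sub ih3 (ih2.const_mul M), integral_const_mul, him2, hS3]
      rw [h2] at h1; exact h1
    -- second moment identity and bounds
    have h2exp : (fun t => (|f t| - M) ^ 2)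
        = fun t => (|f t| ^ 2 - (2 * M) * |f t|) + M ^ 2 := by funext t; ring
    have hsub2 : Integrable (fun t => |f t| ^ 2 - (2 * M) * |f t|) μ :=
      ih2.sub (ih1.const_mul (2 * M))
    have hV'eq : ∫ t, (|f t| - M) ^ 2 ∂μ = m - 2 * M * E + M ^ 2 := by
      rw [h2exp, integral_add hsub2 (integrable_const _),
        integral_sub ih2 (ih1.const_mul (2 * M)), integral_const_mul, integral_const, him2]
      simp [measure_univ, ← hE]
      try ring
    have hiV : Integrable (fun t => (|f t| - M) ^ 2) μ := by
      rw [h2exp]; exact hsub2.add (integrable_const _)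
    have hV'0 : 0 ≤ m - 2 * M * E + M ^ 2 := by
      rw [← hV'eq]; exact integral_nonneg fun t => sq_nonneg _
    have hV'K : m - 2 * M * E + M ^ 2 ≤ K := by
      rw [← hV'eq]
      have hmono : ∫ t, (|f t| - M) ^ 2 ∂μ ≤ ∫ _t, K ∂μ :=
        integral_mono_ae hiV (integrable_const _) (hae.mono fun x hx => hw x hx)
      simpa [measure_univ] using hmono
    -- third moment bound
    have h3exp : (fun t => (|f t| - M) ^ 3)
        = fun t => ((|f t| ^ 3 - (3 * M) * |f t| ^ 2) + (3 * M ^ 2) * |f t|) - M ^ 3 := by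
      funext t; ring
    have hsub3 : Integrable (fun t => |f t| ^ 3 - (3 * M) * |f t| ^ 2) μ :=
      ih3.sub (ih2.const_mul (3 * M))
    have hsub4 : Integrable (fun t => (|f t| ^ 3 - (3 * M) * |f t| ^ 2) + (3 * M ^ 2) * |f t|) μ :=
      hsub3.add (ih1.const_mul (3 * M ^ 2))
    have hi3 : Integrable (fun t => (|f t| - M) ^ 3) μ := by
      rw [h3exp]
      exact hsub4.sub (integrable_const _)
    have h3eq : ∫ t, (|f t| - M) ^ 3 ∂μ = S3 - 3 * M * m + 3 * M ^ 2 * E - M ^ 3 := by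
      rw [h3exp, integral_sub hsub4 (integrable_const _), integral_add hsub3 (ih1.const_mul (3 * M ^ 2)),
        integral_sub ih3 (ih2.const_mul (3 * M)), integral_const_mul, integral_const_mul,
        integral_const, him2, hS3]
      simp [measure_univ, ← hE]
      try ring
    have hW3 : S3 - 3 * M * m + 3 * M ^ 2 * E - M ^ 3
        ≤ Real.sqrt K * (m - 2 * M * E + M ^ 2) := by
      rw [← h3eq, ← hV'eq]
      have hmono : ∫ t, (|f t| - M) ^ 3 ∂μ ≤ ∫ t, Real.sqrt K * (|f t| - M) ^ 2 ∂μ := by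
        refine integral_mono_ae hi3 (hiV.const_mul _) (hae.mono fun x hx => ?_)
        show (|f x| - M) ^ 3 ≤ Real.sqrt K * (|f x| - M) ^ 2
        nlinarith [sq_nonneg (|f x| - M), hwb x hx, Real.sqrt_nonneg K]
      rw [integral_const_mul] at hmono
      exact hmono
    -- final algebra
    have hS3b : S3 - 3 * M * m + 3 * M ^ 2 * E - M ^ 3 ≤ M * (m - 2 * M * E + M ^ 2) :=
      le_trans hW3 (by nlinarith [hV'0, hKM])
    have h5 : 2 * (S3 - M * m) ≤ 5 * M * (m - 2 * M * E + M ^ 2) := by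
      nlinarith [hS3b, hM2, hMpos.le]
    have h6 : 5 * M * (m - 2 * M * E + M ^ 2) ≤ 5 * M * K := by
      nlinarith [hV'K, hMpos.le]
    have hfinal : 2 / M * (S3 - M * m) ≤ 5 * K := by
      rw [div_mul_eq_mul_div, div_le_iff₀ hMpos]
      calc 2 * (S3 - M * m) ≤ 5 * M * K := le_trans h5 h6
        _ = 5 * K * M := by ring
    calc ∫ x, f x ^ 2 * Real.log (f x ^ 2 / m) ∂μ ≤ 2 / M * (S3 - M * m) := hent_int
      _ ≤ 5 * K := hfinal
      _ ≤ 2067 * (R / a) * D := by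
          rw [hKdef]
          have h8 : 2 * R / a * D = 2 * (R / a * D) := by ring
          have h9 : 2067 * (R / a) * D = 2067 * (R / a * D) := by ring
          rw [h8, h9]; linarith [hRaD]
end
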